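/- arXiv:2111.01962 — 6 statements merged into one kernel-verified Lean document; each statement's English description precedes it below -/
import Mathlib

section
/- Let Θ be a 3×3 phase matrix. Then rank_phase(Θ) < 3 if and only if the origin lies in the relative interior of the convex hull (in ℝ² ≅ ℂ) of the six points sgn(σ)·∏_{i=1}^{3} Θ_{i,σ(i)}, σ ranging over the permutations of {1,2,3} (the six signed monomials of the 3×3 determinant evaluated at Θ). -/
open Finset

/-- Auxiliary linear map `x ↦ ∑ x i • z i`. -/
noncomputable def phaseAuxL (z : Fin 3 → ℂ) : (Fin 3 → ℝ) →ₗ[ℝ] ℂ where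
  toFun x := ∑ i, x i • z i
  map_add' x y := by simp [add_smul, Finset.sum_add_distrib]
  map_smul' c x := by simp [smul_smul, Finset.smul_sum, mul_assoc]

lemma phaseAuxL_ker_ne_bot (z : Fin 3 → ℂ) :
    ∃ δ : Fin 3 → ℝ, δ ≠ 0 ∧ ∑ i, δ i • z i = 0 := by
  have h3 : Module.finrank ℝ (Fin 3 → ℝ) = 3 := by simp
  have h2 : Module.finrank ℝ ℂ = 2 := Complex.finrank_real_complex
  by_contra hcon
  push_neg at hcon
  have hinj : Function.Injective (phaseAuxL z) := by
    rw [← LinearMap.ker_eq_bot, Submodule.eq_bot_iff]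
    intro δ hδ
    by_contra hδ0
    exact hcon δ hδ0 hδ
  have := LinearMap.finrank_le_finrank_of_injective hinj
  omega

/-- The product of positive coordinates can be decreased to any positive target value
while preserving the weighted sum against any three complex numbers. -/
lemma exists_posComb_product_eq (z : Fin 3 → ℂ) (x : Fin 3 → ℝ) (hx : ∀ i, 0 < x i)
    {v : ℝ} (hv : 0 < v) (hvle : v ≤ x 0 * x 1 * x 2) :
    ∃ y : Fin 3 → ℝ, (∀ i, 0 < y i) ∧ y 0 * y 1 * y 2 = v ∧
      ∑ i, (y i : ℂ) * z i = ∑ i, (x i : ℂ) * z i := by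
  obtain ⟨δ₀, hδ₀ne, hδ₀ker⟩ := phaseAuxL_ker_ne_bot z
  -- arrange a direction with a negative coordinate
  obtain ⟨j, hj⟩ : ∃ j, δ₀ j ≠ 0 := by
    by_contra h; push_neg at h; exact hδ₀ne (funext fun i => h i)
  obtain ⟨δ, hδker, hδneg⟩ : ∃ δ : Fin 3 → ℝ, (∑ i, δ i • z i = 0) ∧ ∃ i, δ i < 0 := by
    rcases lt_or_gt_of_ne hj with h | h
    · exact ⟨δ₀, hδ₀ker, j, h⟩
    · refine ⟨-δ₀, ?_, j, by simpa using h⟩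
      have : ∑ i, (-δ₀) i • z i = -∑ i, δ₀ i • z i := by
        simp [neg_smul, Finset.sum_neg_distrib]
      rw [this, hδ₀ker, neg_zero]
  classical
  have hJne : (Finset.univ.filter (fun i => δ i < 0)).Nonempty := by
    obtain ⟨i, hi⟩ := hδneg; exact ⟨i, by simp [hi]⟩
  have hTne : ((Finset.univ.filter (fun i => δ i < 0)).image (fun i => x i / (-δ i))).Nonempty :=
    hJne.image _
  set t₁ := ((Finset.univ.filter (fun i => δ i < 0)).image (fun i => x i / (-δ i))).min' hTne
    with ht₁def
  obtain ⟨i₁, hi₁J, hi₁⟩ : ∃ i ∈ Finset.univ.filter (fun i => δ i < 0), x i / (-δ i) = t₁ :=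
    Finset.mem_image.mp (Finset.min'_mem _ hTne)
  have hi₁neg : δ i₁ < 0 := (Finset.mem_filter.mp hi₁J).2
  have ht₁pos : 0 < t₁ := by
    rw [← hi₁]; exact div_pos (hx i₁) (by linarith)
  have hle : ∀ i, δ i < 0 → t₁ ≤ x i / (-δ i) := by
    intro i h
    exact Finset.min'_le _ _ (Finset.mem_image.mpr ⟨i, by simp [h], rfl⟩)
  have hnonneg : ∀ i, ∀ t ∈ Set.Icc (0:ℝ) t₁, 0 ≤ x i + t * δ i := by
    rintro i t ⟨h0, h1⟩
    rcases le_or_gt 0 (δ i) with h | h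
    · nlinarith [hx i]
    · have h2 : t ≤ x i / (-δ i) := le_trans h1 (hle i h)
      rw [le_div_iff₀ (by linarith)] at h2
      nlinarith
  set f : ℝ → ℝ := fun t => ∏ i, (x i + t * δ i) with hf
  have hfc : ContinuousOn f (Set.Icc 0 t₁) := by
    apply Continuous.continuousOn
    exact continuous_finset_prod _ fun i _ => by fun_prop
  have hzero₁ : x i₁ + t₁ * δ i₁ = 0 := by
    have hne : -δ i₁ ≠ 0 := by intro h; rw [neg_eq_zero] at h; exact absurd h (ne_of_lt hi₁neg)
    have h2 : x i₁ / -δ i₁ * δ i₁ = -x i₁ := by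
      rw [div_neg, neg_mul, div_mul_cancel₀ _ (ne_of_lt hi₁neg)]
    rw [← hi₁]; linear_combination h2
  have hft₁ : f t₁ = 0 := Finset.prod_eq_zero (Finset.mem_univ i₁) hzero₁
  have hf0 : f 0 = x 0 * x 1 * x 2 := by
    simp [hf, Fin.prod_univ_three]
  obtain ⟨t, htmem, hft⟩ := intermediate_value_Icc' (le_of_lt ht₁pos) hfc
    (by rw [hft₁, hf0]; exact ⟨le_of_lt hv, hvle⟩)
  have hker' : ∑ i, (δ i : ℂ) * z i = 0 := by
    simpa [Complex.real_smul] using hδker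
  refine ⟨fun i => x i + t * δ i, ?_, by rw [← Fin.prod_univ_three fun i => x i + t * δ i]; exact hft, ?_⟩
  · intro i
    rcases eq_or_lt_of_le (hnonneg i t htmem) with h | h
    · exfalso
      have : f t = 0 := Finset.prod_eq_zero (Finset.mem_univ i) h.symm
      rw [hft] at this; exact absurd this (ne_of_gt hv)
    · exact h
  · calc ∑ i, ((x i + t * δ i : ℝ) : ℂ) * z i
        = ∑ i, ((x i : ℂ) * z i + (t : ℂ) * ((δ i : ℂ) * z i)) :=
          Finset.sum_congr rfl fun i _ => by push_cast; ring
      _ = ∑ i, (x i : ℂ) * z i + (t : ℂ) * ∑ i, (δ i : ℂ) * z i := by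
          rw [Finset.sum_add_distrib, Finset.mul_sum]
      _ = ∑ i, (x i : ℂ) * z i := by rw [hker']; ring


open Finset Set

/-- The linear map sending weights to (weighted sum, total weight). -/
noncomputable def phaseAuxG {ι : Type} [Fintype ι] (p : ι → ℂ) : (ι → ℝ) →ₗ[ℝ] ℂ × ℝ where
  toFun μ := (∑ i, μ i • p i, ∑ i, μ i)
  map_add' x y := by
    simp [add_smul, Finset.sum_add_distrib, Prod.ext_iff]
  map_smul' c x := by
    simp [smul_smul, Finset.smul_sum, mul_assoc, Prod.ext_iff, Finset.mul_sum]

/-- A positive convex combination lies in the intrinsic interior of the convex hull. -/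
lemma posComb_mem_intrinsicInterior {ι : Type} [Fintype ι] (p : ι → ℂ) (w : ι → ℝ)
    (hw : ∀ i, 0 < w i) (hw1 : ∑ i, w i = 1) {x : ℂ} (hx : ∑ i, w i • p i = x) :
    x ∈ intrinsicInterior ℝ (convexHull ℝ (Set.range p)) := by
  classical
  set s := convexHull ℝ (Set.range p) with hs
  have hxs : x ∈ s := mem_convexHull_of_exists_fintype w p (fun i => (hw i).le) hw1
    (fun i => Set.mem_range_self i) hx
  set G := phaseAuxG p with hG
  set W := LinearMap.range G with hW
  -- the affine condition : (y,1) ∈ W for every y in the affine span of s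
  have hPsingle : ∀ i, G (Pi.single i 1) = (p i, 1) := by
    intro i
    simp only [hG, phaseAuxG, LinearMap.coe_mk, AddHom.coe_mk]
    have h1 : (∑ j, (Pi.single i 1 : ι → ℝ) j • p j) = p i := by
      rw [Finset.sum_eq_single i (fun b _ hb => by simp [Pi.single_apply, hb]) (by simp)]
      simp
    have h2 : (∑ j, (Pi.single i 1 : ι → ℝ) j) = 1 := by
      rw [Finset.sum_eq_single i (fun b _ hb => by simp [Pi.single_apply, hb]) (by simp)]
      simp
    rw [h1, h2]
  set A' : AffineSubspace ℝ ℂ :=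
    { carrier := {y : ℂ | (y, (1:ℝ)) ∈ W}
      smul_vsub_vadd_mem' := by
        rintro c y1 y2 y3 h1 h2 h3
        have : ((c • (y1 -ᵥ y2) +ᵥ y3 : ℂ), (1:ℝ)) = c • ((y1, (1:ℝ)) - (y2, 1)) + (y3, 1) := by
          refine Prod.ext ?_ ?_
          · simp [vadd_eq_add, vsub_eq_sub]
          · simp
        rw [Set.mem_setOf_eq, this]
        exact W.add_mem (W.smul_mem c (W.sub_mem h1 h2)) h3 } with hA'
  have hspanle : affineSpan ℝ s ≤ A' := by
    rw [hs, affineSpan_convexHull]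
    apply affineSpan_le.mpr
    rintro y ⟨i, rfl⟩
    show ((p i : ℂ), (1:ℝ)) ∈ W
    rw [← hPsingle i]
    exact LinearMap.mem_range_self G (Pi.single i 1)
  have hxspan : x ∈ affineSpan ℝ s := subset_affineSpan ℝ s hxs
  -- the continuous map from the affine span into W
  have hWfd : FiniteDimensional ℝ W := inferInstance
  set G' : (ι → ℝ) →L[ℝ] W := LinearMap.toContinuousLinearMap G.rangeRestrict with hG'
  have hsurj : Function.Surjective G' := LinearMap.surjective_rangeRestrict G
  have hopen : IsOpenMap G' := ContinuousLinearMap.isOpenMap G' hsurj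
  set orth : Set (ι → ℝ) := {μ | ∀ i, 0 < μ i} with horth
  have horthopen : IsOpen orth := by
    have : orth = ⋂ i, (fun μ : ι → ℝ => μ i) ⁻¹' (Set.Ioi 0) := by
      ext μ; simp [horth]
    rw [this]
    exact isOpen_iInter_of_finite fun i => (isOpen_Ioi).preimage (continuous_apply i)
  set U : Set W := G' '' orth with hU
  have hUopen : IsOpen U := hopen _ horthopen
  set φ : (affineSpan ℝ s : Set ℂ) → W :=
    fun a => ⟨((a : ℂ), (1:ℝ)), hspanle a.2⟩ with hφ
  have hφc : Continuous φ := by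
    apply Continuous.subtype_mk
    exact (continuous_subtype_val.prodMk continuous_const)
  refine mem_intrinsicInterior.mpr ⟨⟨x, hxspan⟩, ?_, rfl⟩
  apply mem_interior.mpr
  refine ⟨φ ⁻¹' U, ?_, hUopen.preimage hφc, ?_⟩
  · -- preimage is contained in the (preimage of the) convex hull
    rintro a ⟨μ, hμorth, hμeq⟩
    have hval : G μ = ((a : ℂ), (1:ℝ)) := congrArg Subtype.val hμeq
    have h1 : ∑ i, μ i • p i = (a : ℂ) := congrArg Prod.fst hval
    have h2 : ∑ i, μ i = 1 := congrArg Prod.snd hval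
    exact mem_convexHull_of_exists_fintype μ p (fun i => (hμorth i).le) h2
      (fun i => Set.mem_range_self i) h1
  · exact ⟨w, hw, Subtype.ext (by exact congrArg₂ Prod.mk hx hw1)⟩

/-- A point of the intrinsic interior of the convex hull of a finite family is a positive
convex combination of the family. -/
lemma exists_posComb_of_mem_intrinsicInterior {ι : Type} [Fintype ι] [Nonempty ι]
    (p : ι → ℂ) {x : ℂ}
    (hx : x ∈ intrinsicInterior ℝ (convexHull ℝ (Set.range p))) :
    ∃ w : ι → ℝ, (∀ i, 0 < w i) ∧ ∑ i, w i = 1 ∧ ∑ i, w i • p i = x := by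
  classical
  set s := convexHull ℝ (Set.range p) with hs
  set n : ℝ := (Fintype.card ι : ℝ) with hn
  have hnpos : 0 < n := by
    simp only [hn]
    exact_mod_cast Fintype.card_pos
  -- the barycenter
  set β : ℂ := ∑ i, n⁻¹ • p i with hβ
  have hβs : β ∈ s := by
    apply mem_convexHull_of_exists_fintype (fun _ => n⁻¹) p
      (fun i => by positivity) (by simp [Finset.sum_const, hn]) (fun i => Set.mem_range_self i) rfl
  obtain ⟨y, hyint, hyx⟩ := mem_intrinsicInterior.mp hx
  have hxspan : x ∈ affineSpan ℝ s := by rw [← hyx]; exact y.2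
  have hβspan : β ∈ affineSpan ℝ s := subset_affineSpan ℝ s hβs
  -- move a little bit past x away from β
  have hmem : ∀ t : ℝ, t • (x - β) + x ∈ affineSpan ℝ s := by
    intro t
    have := AffineSubspace.smul_vsub_vadd_mem (affineSpan ℝ s) t hxspan hβspan hxspan
    simpa [vsub_eq_sub, vadd_eq_add] using this
  set γ : ℝ → (affineSpan ℝ s : Set ℂ) := fun t => ⟨t • (x - β) + x, hmem t⟩ with hγ
  have hγc : Continuous γ := by
    apply Continuous.subtype_mk
    exact (continuous_id.smul continuous_const).add continuous_const
  have hγ0 : γ 0 = y := Subtype.ext (by simp [hγ, ← hyx])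
  have hopen : IsOpen (γ ⁻¹' interior ((↑) ⁻¹' s : Set <| affineSpan ℝ s)) :=
    isOpen_interior.preimage hγc
  have h0mem : (0:ℝ) ∈ γ ⁻¹' interior ((↑) ⁻¹' s : Set <| affineSpan ℝ s) := by
    simp only [Set.mem_preimage, hγ0]; exact hyint
  obtain ⟨ε, hε, hball⟩ := Metric.isOpen_iff.mp hopen 0 h0mem
  set t : ℝ := ε / 2 with ht
  have htpos : 0 < t := by positivity
  have htball : t ∈ Metric.ball (0:ℝ) ε := by
    simp only [Metric.mem_ball, Real.dist_eq, sub_zero, ht]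
    rw [abs_of_pos htpos]; linarith
  have hx'' : γ t ∈ Subtype.val ⁻¹' s := interior_subset (hball htball)
  have hx' : t • (x - β) + x ∈ s := hx''
  -- extract nonnegative weights for x'
  rw [hs, mem_convexHull_iff_exists_fintype] at hx'
  obtain ⟨ι', hFt, μ, ζ, hμ0, hμ1, hζ, hsum⟩ := hx'
  choose f hf using fun j => Set.mem_range.mp (hζ j)
  set ν : ι → ℝ := fun i => ∑ j ∈ Finset.univ.filter (fun j => f j = i), μ j with hν
  have hν0 : ∀ i, 0 ≤ ν i := fun i => Finset.sum_nonneg fun j _ => hμ0 j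
  have hν1 : ∑ i, ν i = 1 := by
    rw [hν, Finset.sum_fiberwise Finset.univ f μ, hμ1]
  have hνsum : ∑ i, ν i • p i = t • (x - β) + x := by
    have : ∀ i, ν i • p i = ∑ j ∈ Finset.univ.filter (fun j => f j = i), μ j • p (f j) := by
      intro i
      rw [hν, Finset.sum_smul]
      apply Finset.sum_congr rfl
      intro j hj
      rw [(Finset.mem_filter.mp hj).2]
    rw [Finset.sum_congr rfl fun i _ => this i,
      Finset.sum_fiberwise Finset.univ f (fun j => μ j • p (f j))]
    rw [← hsum]
    exact Finset.sum_congr rfl fun j _ => by rw [hf j]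
  -- final weights
  refine ⟨fun i => (ν i + t * n⁻¹) / (1 + t), ?_, ?_, ?_⟩
  · intro i
    have := hν0 i
    have : 0 < ν i + t * n⁻¹ := by positivity
    positivity
  · rw [← Finset.sum_div, Finset.sum_add_distrib, hν1, Finset.sum_const, hn]
    field_simp
    have hc : (Fintype.card ι : ℝ) ≠ 0 := Nat.cast_ne_zero.mpr Fintype.card_ne_zero
    rw [Finset.card_univ, nsmul_eq_mul, mul_comm, div_mul_cancel₀ t hc]
  · have expand : ∀ i, ((ν i + t * n⁻¹) / (1 + t)) • p i
        = (1 + t)⁻¹ • (ν i • p i) + (1 + t)⁻¹ • (t • (n⁻¹ • p i)) := by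
      intro i
      module
    rw [Finset.sum_congr rfl fun i _ => expand i, Finset.sum_add_distrib,
      ← Finset.smul_sum, ← Finset.smul_sum, ← Finset.smul_sum, hνsum, ← hβ, ← smul_add]
    have h1t : (1 + t) ≠ 0 := by positivity
    have hinside : (t • (x - β) + x) + t • β = (1 + t) • x := by
      simp only [Complex.real_smul]
      push_cast
      ring
    rw [hinside, smul_smul, inv_mul_cancel₀ h1t, one_smul]


lemma rank_lt_three_of_det_zero (M : Matrix (Fin 3) (Fin 3) ℂ) (h : M.det = 0) :
    M.rank < 3 := by
  obtain ⟨v, hv, hMv⟩ := (Matrix.exists_mulVec_eq_zero_iff).mpr h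
  have hrk := LinearMap.finrank_range_add_finrank_ker M.mulVecLin
  have hdom : Module.finrank ℂ (Fin 3 → ℂ) = 3 := by simp
  have hker : 0 < Module.finrank ℂ (LinearMap.ker M.mulVecLin) := by
    rw [Module.finrank_pos_iff]
    refine ⟨⟨⟨v, ?_⟩, 0, ?_⟩⟩
    · rw [LinearMap.mem_ker, Matrix.mulVecLin_apply, hMv]
    · simp [Submodule.mk_eq_zero, hv]
  have : M.rank = Module.finrank ℂ (LinearMap.range M.mulVecLin) := rfl
  omega

lemma rank_eq_three_of_det_ne_zero (M : Matrix (Fin 3) (Fin 3) ℂ) (h : M.det ≠ 0) :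
    M.rank = 3 := by
  have := Matrix.rank_of_isUnit M ((Matrix.isUnit_iff_isUnit_det M).mpr (isUnit_iff_ne_zero.mpr h))
  simpa using this


open Finset

noncomputable def permMonomial (Θ : Matrix (Fin 3) (Fin 3) ℂ) (σ : Equiv.Perm (Fin 3)) : ℂ :=
  ((Equiv.Perm.sign σ : ℤ) : ℂ) * ∏ i, Θ i (σ i)

lemma det_expansion (Θ M : Matrix (Fin 3) (Fin 3) ℂ)
    (hM0 : ∀ i j, M i j ≠ 0) (hMph : ∀ i j, M i j / (‖M i j‖ : ℂ) = Θ i j) :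
    M.det = ∑ σ : Equiv.Perm (Fin 3),
      ((∏ i, ‖M i (σ i)‖ : ℝ) : ℂ) * permMonomial Θ σ := by
  have hentry : ∀ i j, M i j = (‖M i j‖ : ℂ) * Θ i j := by
    intro i j
    rw [← hMph i j, mul_div_assoc', mul_comm, mul_div_assoc, div_self
      (Complex.ofReal_ne_zero.mpr (norm_ne_zero_iff.mpr (hM0 i j))), mul_one]
  rw [← Matrix.det_transpose, Matrix.det_apply]
  apply Finset.sum_congr rfl
  intro σ _
  have h1 : ∏ i, M.transpose (σ i) i = ∏ i, M i (σ i) := by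
    apply Finset.prod_congr rfl
    intro i _
    rw [Matrix.transpose_apply]
  have h2 : ∏ i, M i (σ i) = ((∏ i, ‖M i (σ i)‖ : ℝ) : ℂ) * ∏ i, Θ i (σ i) := by
    push_cast
    rw [← Finset.prod_mul_distrib]
    exact Finset.prod_congr rfl fun i _ => hentry i (σ i)
  rw [h1, h2, permMonomial]
  rw [Units.smul_def, zsmul_eq_mul]
  ring

lemma mem_intrinsic_of_det_zero (Θ M : Matrix (Fin 3) (Fin 3) ℂ)
    (hM0 : ∀ i j, M i j ≠ 0) (hMph : ∀ i j, M i j / (‖M i j‖ : ℂ) = Θ i j)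
    (hdet : M.det = 0) :
    (0:ℂ) ∈ intrinsicInterior ℝ (convexHull ℝ (Set.range (permMonomial Θ))) := by
  classical
  set r : Equiv.Perm (Fin 3) → ℝ := fun σ => ∏ i, ‖M i (σ i)‖ with hr
  have hrpos : ∀ σ, 0 < r σ := fun σ => Finset.prod_pos fun i _ =>
    norm_pos_iff.mpr (hM0 i (σ i))
  set R : ℝ := ∑ σ, r σ with hR
  have hRpos : 0 < R := Finset.sum_pos (fun σ _ => hrpos σ) Finset.univ_nonempty
  have hsum0 : ∑ σ, ((r σ : ℝ) : ℂ) * permMonomial Θ σ = 0 := by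
    rw [← det_expansion Θ M hM0 hMph]; exact hdet
  refine posComb_mem_intrinsicInterior (permMonomial Θ) (fun σ => r σ / R) (fun σ => div_pos (hrpos σ) hRpos) ?_ ?_
  · rw [← Finset.sum_div, ← hR, div_self (ne_of_gt hRpos)]
  · have : ∀ σ : Equiv.Perm (Fin 3), (r σ / R) • permMonomial Θ σ
        = (R:ℂ)⁻¹ * (((r σ : ℝ):ℂ) * permMonomial Θ σ) := by
      intro σ
      rw [Complex.real_smul]
      push_cast
      ring
    rw [Finset.sum_congr rfl fun σ _ => this σ, ← Finset.mul_sum, hsum0, mul_zero]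


open Finset

def permC3 : Equiv.Perm (Fin 3) := ⟨![1, 2, 0], ![2, 0, 1], by decide, by decide⟩
def permC3' : Equiv.Perm (Fin 3) := ⟨![2, 0, 1], ![1, 2, 0], by decide, by decide⟩
def permS01 : Equiv.Perm (Fin 3) := ⟨![1, 0, 2], ![1, 0, 2], by decide, by decide⟩
def permS02 : Equiv.Perm (Fin 3) := ⟨![2, 1, 0], ![2, 1, 0], by decide, by decide⟩
def permS12 : Equiv.Perm (Fin 3) := ⟨![0, 2, 1], ![0, 2, 1], by decide, by decide⟩

lemma perm3_sum (f : Equiv.Perm (Fin 3) → ℂ) :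
    ∑ σ, f σ = f 1 + f permC3 + f permC3' + f permS12 + f permS01 + f permS02 := by
  have huniv : (Finset.univ : Finset (Equiv.Perm (Fin 3)))
      = {1, permC3, permC3', permS12, permS01, permS02} := by decide
  rw [huniv, Finset.sum_insert (by decide), Finset.sum_insert (by decide),
    Finset.sum_insert (by decide), Finset.sum_insert (by decide),
    Finset.sum_insert (by decide), Finset.sum_singleton]
  ring

lemma permMonomial_one (Θ : Matrix (Fin 3) (Fin 3) ℂ) :
    permMonomial Θ 1 = Θ 0 0 * Θ 1 1 * Θ 2 2 := by
  rw [permMonomial, Fin.prod_univ_three]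
  rw [show Equiv.Perm.sign (1 : Equiv.Perm (Fin 3)) = 1 from by decide]
  norm_num

lemma permMonomial_c3 (Θ : Matrix (Fin 3) (Fin 3) ℂ) :
    permMonomial Θ permC3 = Θ 0 1 * Θ 1 2 * Θ 2 0 := by
  rw [permMonomial, Fin.prod_univ_three]
  rw [show Equiv.Perm.sign permC3 = 1 from by decide,
    show permC3 0 = 1 from rfl, show permC3 1 = 2 from rfl, show permC3 2 = 0 from rfl]
  norm_num

lemma permMonomial_c3' (Θ : Matrix (Fin 3) (Fin 3) ℂ) :
    permMonomial Θ permC3' = Θ 0 2 * Θ 1 0 * Θ 2 1 := by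
  rw [permMonomial, Fin.prod_univ_three]
  rw [show Equiv.Perm.sign permC3' = 1 from by decide,
    show permC3' 0 = 2 from rfl, show permC3' 1 = 0 from rfl, show permC3' 2 = 1 from rfl]
  norm_num

lemma permMonomial_s12 (Θ : Matrix (Fin 3) (Fin 3) ℂ) :
    permMonomial Θ permS12 = -(Θ 0 0 * Θ 1 2 * Θ 2 1) := by
  rw [permMonomial, Fin.prod_univ_three]
  rw [show Equiv.Perm.sign permS12 = -1 from by decide,
    show permS12 0 = 0 from rfl, show permS12 1 = 2 from rfl, show permS12 2 = 1 from rfl]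
  norm_num

lemma permMonomial_s01 (Θ : Matrix (Fin 3) (Fin 3) ℂ) :
    permMonomial Θ permS01 = -(Θ 0 1 * Θ 1 0 * Θ 2 2) := by
  rw [permMonomial, Fin.prod_univ_three]
  rw [show Equiv.Perm.sign permS01 = -1 from by decide,
    show permS01 0 = 1 from rfl, show permS01 1 = 0 from rfl, show permS01 2 = 2 from rfl]
  norm_num

lemma permMonomial_s02 (Θ : Matrix (Fin 3) (Fin 3) ℂ) :
    permMonomial Θ permS02 = -(Θ 0 2 * Θ 1 1 * Θ 2 0) := by
  rw [permMonomial, Fin.prod_univ_three]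
  rw [show Equiv.Perm.sign permS02 = -1 from by decide,
    show permS02 0 = 2 from rfl, show permS02 1 = 1 from rfl, show permS02 2 = 0 from rfl]
  norm_num


lemma exists_det_zero_of_posweights (Θ : Matrix (Fin 3) (Fin 3) ℂ)
    (hphase : ∀ i j, ‖Θ i j‖ = 1)
    (w : Equiv.Perm (Fin 3) → ℝ) (hw : ∀ σ, 0 < w σ)
    (hsum : ∑ σ, w σ • permMonomial Θ σ = 0) :
    ∃ M : Matrix (Fin 3) (Fin 3) ℂ, (∀ i j, M i j ≠ 0) ∧
      (∀ i j, M i j / (‖M i j‖ : ℂ) = Θ i j) ∧ M.det = 0 := by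
  have hexp := perm3_sum (fun σ => w σ • permMonomial Θ σ)
  rw [hsum] at hexp
  simp only [permMonomial_one, permMonomial_c3, permMonomial_c3', permMonomial_s12,
    permMonomial_s01, permMonomial_s02, Complex.real_smul] at hexp
  -- the six monomials, three "even" and three "odd"
  set zE : Fin 3 → ℂ := ![Θ 0 0 * Θ 1 1 * Θ 2 2, Θ 0 1 * Θ 1 2 * Θ 2 0, Θ 0 2 * Θ 1 0 * Θ 2 1]
    with hzE
  set zO : Fin 3 → ℂ := ![Θ 0 0 * Θ 1 2 * Θ 2 1, Θ 0 1 * Θ 1 0 * Θ 2 2, Θ 0 2 * Θ 1 1 * Θ 2 0]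
    with hzO
  set xE : Fin 3 → ℝ := ![w 1, w permC3, w permC3'] with hxE
  set xO : Fin 3 → ℝ := ![w permS12, w permS01, w permS02] with hxO
  have hxEpos : ∀ i, 0 < xE i := by
    intro i; fin_cases i
    · exact hw 1
    · exact hw permC3
    · exact hw permC3'
  have hxOpos : ∀ i, 0 < xO i := by
    intro i; fin_cases i
    · exact hw permS12
    · exact hw permS01
    · exact hw permS02
  set v : ℝ := min (xE 0 * xE 1 * xE 2) (xO 0 * xO 1 * xO 2) with hv
  have hvpos : 0 < v := lt_min (mul_pos (mul_pos (hxEpos 0) (hxEpos 1)) (hxEpos 2)) (mul_pos (mul_pos (hxOpos 0) (hxOpos 1)) (hxOpos 2))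
  obtain ⟨yE, hyEpos, hyEprod, hyEsum⟩ :=
    exists_posComb_product_eq zE xE hxEpos hvpos (min_le_left _ _)
  obtain ⟨yO, hyOpos, hyOprod, hyOsum⟩ :=
    exists_posComb_product_eq zO xO hxOpos hvpos (min_le_right _ _)
  -- the common value of the two weighted sums
  have hxEO : ∑ i, (xE i : ℂ) * zE i = ∑ i, (xO i : ℂ) * zO i := by
    rw [Fin.sum_univ_three, Fin.sum_univ_three]
    show (w 1 : ℂ) * (Θ 0 0 * Θ 1 1 * Θ 2 2) + (w permC3 : ℂ) * (Θ 0 1 * Θ 1 2 * Θ 2 0)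
        + (w permC3' : ℂ) * (Θ 0 2 * Θ 1 0 * Θ 2 1)
      = (w permS12 : ℂ) * (Θ 0 0 * Θ 1 2 * Θ 2 1) + (w permS01 : ℂ) * (Θ 0 1 * Θ 1 0 * Θ 2 2)
        + (w permS02 : ℂ) * (Θ 0 2 * Θ 1 1 * Θ 2 0)
    linear_combination -hexp
  have hEO : ∑ i, (yE i : ℂ) * zE i = ∑ i, (yO i : ℂ) * zO i := by
    rw [hyEsum, hyOsum]; exact hxEO
  have hbalR : yE 0 * yE 1 * yE 2 = yO 0 * yO 1 * yO 2 := by rw [hyEprod, hyOprod]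
  have hbal : ((yE 0 : ℂ)) * (yE 1) * (yE 2) = ((yO 0 : ℂ)) * (yO 1) * (yO 2) := by
    exact_mod_cast congrArg Complex.ofReal hbalR
  -- the matrix of moduli
  set mS : Matrix (Fin 3) (Fin 3) ℝ :=
    ![![1, yE 1, yO 2], ![yE 2 / (yO 0 * yO 2), 1, 1], ![1, yO 0, yE 0]] with hmS
  have hmSpos : ∀ i j, 0 < mS i j := by
    intro i j
    have h0 := hyEpos 0; have h1 := hyEpos 1; have h2 := hyEpos 2
    have g0 := hyOpos 0; have g1 := hyOpos 1; have g2 := hyOpos 2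
    fin_cases i <;> fin_cases j <;> simp [hmS] <;> positivity
  have hΘ0 : ∀ i j, Θ i j ≠ 0 := by
    intro i j h
    have := hphase i j
    rw [h] at this
    simp at this
  refine ⟨Matrix.of fun i j => (mS i j : ℂ) * Θ i j, ?_, ?_, ?_⟩
  · intro i j
    exact mul_ne_zero (Complex.ofReal_ne_zero.mpr (ne_of_gt (hmSpos i j))) (hΘ0 i j)
  · intro i j
    have habs : ‖(mS i j : ℂ) * Θ i j‖ = mS i j := by
      rw [norm_mul, Complex.norm_real, Real.norm_eq_abs, hphase i j, mul_one, abs_of_pos (hmSpos i j)]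
    simp only [Matrix.of_apply]
    rw [habs, mul_comm, mul_div_assoc, div_self (Complex.ofReal_ne_zero.mpr
      (ne_of_gt (hmSpos i j))), mul_one]
  · rw [Matrix.det_fin_three]
    simp only [Matrix.of_apply]
    have e00 : mS 0 0 = 1 := rfl
    have e01 : mS 0 1 = yE 1 := rfl
    have e02 : mS 0 2 = yO 2 := rfl
    have e10 : mS 1 0 = yE 2 / (yO 0 * yO 2) := rfl
    have e11 : mS 1 1 = 1 := rfl
    have e12 : mS 1 2 = 1 := rfl
    have e20 : mS 2 0 = 1 := rfl
    have e21 : mS 2 1 = yO 0 := rfl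
    have e22 : mS 2 2 = yE 0 := rfl
    rw [e00, e01, e02, e10, e11, e12, e20, e21, e22]
    have hEOx : (yE 0 : ℂ) * (Θ 0 0 * Θ 1 1 * Θ 2 2) + (yE 1 : ℂ) * (Θ 0 1 * Θ 1 2 * Θ 2 0)
        + (yE 2 : ℂ) * (Θ 0 2 * Θ 1 0 * Θ 2 1)
      = (yO 0 : ℂ) * (Θ 0 0 * Θ 1 2 * Θ 2 1) + (yO 1 : ℂ) * (Θ 0 1 * Θ 1 0 * Θ 2 2)
        + (yO 2 : ℂ) * (Θ 0 2 * Θ 1 1 * Θ 2 0) := by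
      have := hEO
      rw [Fin.sum_univ_three, Fin.sum_univ_three] at this
      exact this
    have hq0 : ((yO 0 : ℝ) : ℂ) ≠ 0 := Complex.ofReal_ne_zero.mpr (ne_of_gt (hyOpos 0))
    have hq2 : ((yO 2 : ℝ) : ℂ) ≠ 0 := Complex.ofReal_ne_zero.mpr (ne_of_gt (hyOpos 2))
    push_cast
    field_simp
    linear_combination ((yO 0 : ℂ) * (yO 2 : ℂ)) * hEOx
      - (Θ 0 1 * Θ 1 0 * Θ 2 2) * hbal

/-- The phase rank of a complex matrix `Θ`: the minimum rank over all complex matrices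
with nonzero entries whose entrywise phases agree with `Θ`. -/
noncomputable def phaseRank {n m : ℕ} (Θ : Matrix (Fin n) (Fin m) ℂ) : ℕ :=
  sInf {r | ∃ M : Matrix (Fin n) (Fin m) ℂ,
    (∀ i j, M i j ≠ 0) ∧ (∀ i j, M i j / (‖M i j‖ : ℂ) = Θ i j) ∧ M.rank = r}

/-- A 3×3 phase matrix has phase rank less than 3 if and only if the origin lies in the
relative interior of the convex hull of the six signed monomials of the determinant. -/
theorem phaseRank_lt_three_iff_zero_mem_relint
    (Θ : Matrix (Fin 3) (Fin 3) ℂ) (hphase : ∀ i j, ‖Θ i j‖ = 1) :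
    phaseRank Θ < 3 ↔
      (0 : ℂ) ∈ intrinsicInterior ℝ (convexHull ℝ
        {w : ℂ | ∃ σ : Equiv.Perm (Fin 3),
          w = ((Equiv.Perm.sign σ : ℤ) : ℂ) * ∏ i, Θ i (σ i)}) := by
  classical
  have hΘ0 : ∀ i j, Θ i j ≠ 0 := by
    intro i j h
    have := hphase i j
    rw [h] at this
    simp at this
  have hsetr : {w : ℂ | ∃ σ : Equiv.Perm (Fin 3),
      w = ((Equiv.Perm.sign σ : ℤ) : ℂ) * ∏ i, Θ i (σ i)} = Set.range (permMonomial Θ) := by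
    ext u
    constructor
    · rintro ⟨σ, rfl⟩; exact ⟨σ, rfl⟩
    · rintro ⟨σ, rfl⟩; exact ⟨σ, rfl⟩
  rw [hsetr]
  constructor
  · intro hlt
    have hne : {r | ∃ M : Matrix (Fin 3) (Fin 3) ℂ,
        (∀ i j, M i j ≠ 0) ∧ (∀ i j, M i j / (‖M i j‖ : ℂ) = Θ i j)
        ∧ M.rank = r}.Nonempty := by
      refine ⟨Θ.rank, Θ, hΘ0, fun i j => ?_, rfl⟩
      rw [hphase i j]
      simp
    have hmem := Nat.sInf_mem hne
    obtain ⟨M, hM0, hMph, hMrank⟩ := hmem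
    have hrlt : M.rank < 3 := lt_of_eq_of_lt hMrank hlt
    have hdet : M.det = 0 := by
      by_contra h
      have h3 := rank_eq_three_of_det_ne_zero M h
      rw [h3] at hrlt
      exact absurd hrlt (lt_irrefl 3)
    exact mem_intrinsic_of_det_zero Θ M hM0 hMph hdet
  · intro h0
    obtain ⟨w, hwpos, hw1, hwsum⟩ := exists_posComb_of_mem_intrinsicInterior (permMonomial Θ) h0
    obtain ⟨M, hM0, hMph, hdet⟩ := exists_det_zero_of_posweights Θ hphase w hwpos hwsum
    have hle : phaseRank Θ ≤ M.rank := Nat.sInf_le ⟨M, hM0, hMph, rfl⟩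
    exact lt_of_le_of_lt hle (rank_lt_three_of_det_zero M hdet)
end

section
/- Let Θ be a 3×3 phase matrix. Then rank_phase(Θ) < 3 if and only if there exists a family of strictly positive reals (c_σ)_{σ ∈ S_3}, indexed by the permutations of {1,2,3}, such that ∑_{σ ∈ S_3} sgn(σ)·c_σ·∏_{i=1}^{3} Θ_{i,σ(i)} = 0 and ∏_{σ even} c_σ = ∏_{σ odd} c_σ. -/
lemma aux_rank_lt_three_iff_det {A : Matrix (Fin 3) (Fin 3) ℂ} : A.rank < 3 ↔ A.det = 0 := by
  constructor
  · intro h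
    by_contra hd
    have : IsUnit A := (Matrix.isUnit_iff_isUnit_det A).mpr (isUnit_iff_ne_zero.mpr hd)
    rw [Matrix.rank_of_isUnit A this] at h
    simp at h
  · intro hd
    obtain ⟨v, hv, hMv⟩ := (Matrix.exists_mulVec_eq_zero_iff).mpr hd
    have hker : 0 < Module.finrank ℂ (LinearMap.ker A.mulVecLin) := by
      rw [Module.finrank_pos_iff]
      exact ⟨⟨⟨v, by simpa [Matrix.mulVecLin] using hMv⟩, 0, by simpa using hv⟩⟩
    have hrn := LinearMap.finrank_range_add_finrank_ker A.mulVecLin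
    have h3 : Module.finrank ℂ (Fin 3 → ℂ) = 3 := by simp
    rw [h3] at hrn
    have : A.rank = Module.finrank ℂ (LinearMap.range A.mulVecLin) := rfl
    omega

lemma aux_det_expand (M : Matrix (Fin 3) (Fin 3) ℂ) : M.det = ∑ σ : Equiv.Perm (Fin 3),
    ((Equiv.Perm.sign σ : ℤ) : ℂ) * ∏ i, M i (σ i) := by
  rw [← Matrix.det_transpose M, Matrix.det_apply']
  rfl

lemma aux_count (σ τ : Equiv.Perm (Fin 3)) :
    (2 * ((Finset.univ.filter (fun i => τ i = σ i)).card : ℤ) - 1)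
      = 6 * (if σ = τ then 1 else 0) - ((Equiv.Perm.sign σ : ℤ) * (Equiv.Perm.sign τ : ℤ)) := by
  revert σ τ; decide

lemma aux_even : (Finset.univ.filter (fun σ : Equiv.Perm (Fin 3) => Equiv.Perm.sign σ = 1)) =
    {1, finRotate 3, (finRotate 3)^2} := by decide

lemma aux_odd : (Finset.univ.filter (fun σ : Equiv.Perm (Fin 3) => Equiv.Perm.sign σ = -1)) =
    {Equiv.swap 0 1, Equiv.swap 0 2, Equiv.swap 1 2} := by decide

/-- A 3×3 phase matrix has phase rank less than 3 if and only if there is a vector of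
strictly positive coefficients `c`, indexed by the permutations of `{1,2,3}`, making the
signed combination of determinant monomials vanish, and whose product over even
permutations equals its product over odd permutations. -/
theorem phaseRank_lt_three_iff_exists_positive_coeffs
    (Θ : Matrix (Fin 3) (Fin 3) ℂ) (hphase : ∀ i j, ‖Θ i j‖ = 1) :
    phaseRank Θ < 3 ↔
      ∃ c : Equiv.Perm (Fin 3) → ℝ, (∀ σ, 0 < c σ) ∧
        (∑ σ : Equiv.Perm (Fin 3),
          ((Equiv.Perm.sign σ : ℤ) : ℂ) * (c σ : ℂ) * ∏ i, Θ i (σ i)) = 0 ∧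
        (∏ σ ∈ Finset.univ.filter (fun σ : Equiv.Perm (Fin 3) => Equiv.Perm.sign σ = 1), c σ) =
        (∏ σ ∈ Finset.univ.filter (fun σ : Equiv.Perm (Fin 3) => Equiv.Perm.sign σ = -1), c σ) := by
  have hΘne : ∀ i j, Θ i j ≠ 0 := by
    intro i j h
    have := hphase i j
    rw [h] at this; simp at this
  constructor
  · intro h
    -- the defining set is nonempty (Θ itself is a witness)
    have hmem : Θ.rank ∈ {r | ∃ M : Matrix (Fin 3) (Fin 3) ℂ,
        (∀ i j, M i j ≠ 0) ∧ (∀ i j, M i j / (‖M i j‖ : ℂ) = Θ i j) ∧ M.rank = r} :=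
      ⟨Θ, hΘne, fun i j => by rw [hphase i j]; simp, rfl⟩
    obtain ⟨M, hM0, hMph, hMr⟩ := Nat.sInf_mem ⟨Θ.rank, hmem⟩
    have hdet : M.det = 0 := aux_rank_lt_three_iff_det.mp (by rw [hMr]; exact h)
    set a : Fin 3 → Fin 3 → ℝ := fun i j => ‖M i j‖ with ha
    have hapos : ∀ i j, 0 < a i j := fun i j => norm_pos_iff.mpr (hM0 i j)
    have hMj : ∀ i j, ((a i j : ℝ) : ℂ) * Θ i j = M i j := by
      intro i j
      have hane : ((a i j : ℝ) : ℂ) ≠ 0 := by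
        simpa [ha] using (hapos i j).ne'
      rw [← hMph i j, mul_comm]
      exact div_mul_cancel₀ _ hane
    refine ⟨fun σ => ∏ i, a i (σ i), fun σ => Finset.prod_pos fun i _ => hapos _ _, ?_, ?_⟩
    · rw [← hdet, aux_det_expand]
      refine Finset.sum_congr rfl fun σ _ => ?_
      rw [mul_assoc]
      congr 1
      push_cast
      rw [← Finset.prod_mul_distrib]
      exact Finset.prod_congr rfl fun i _ => hMj i (σ i)
    · rw [aux_even, aux_odd]
      rw [Finset.prod_insert (by decide), Finset.prod_insert (by decide),
        Finset.prod_singleton, Finset.prod_insert (by decide), Finset.prod_insert (by decide),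
        Finset.prod_singleton]
      simp only [Fin.prod_univ_three,
        show ((1:Equiv.Perm (Fin 3)) 0) = 0 from rfl,
        show ((1:Equiv.Perm (Fin 3)) 1) = 1 from rfl,
        show ((1:Equiv.Perm (Fin 3)) 2) = 2 from rfl,
        show ((finRotate 3) (0:Fin 3)) = 1 from rfl,
        show ((finRotate 3) (1:Fin 3)) = 2 from rfl,
        show ((finRotate 3) (2:Fin 3)) = 0 from rfl,
        show (((finRotate 3)^2) (0:Fin 3)) = 2 from rfl,
        show (((finRotate 3)^2) (1:Fin 3)) = 0 from rfl,
        show (((finRotate 3)^2) (2:Fin 3)) = 1 from rfl,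
        show ((Equiv.swap (0:Fin 3) 1) 0) = 1 from rfl,
        show ((Equiv.swap (0:Fin 3) 1) 1) = 0 from rfl,
        show ((Equiv.swap (0:Fin 3) 1) 2) = 2 from rfl,
        show ((Equiv.swap (0:Fin 3) 2) 0) = 2 from rfl,
        show ((Equiv.swap (0:Fin 3) 2) 1) = 1 from rfl,
        show ((Equiv.swap (0:Fin 3) 2) 2) = 0 from rfl,
        show ((Equiv.swap (1:Fin 3) 2) 0) = 0 from rfl,
        show ((Equiv.swap (1:Fin 3) 2) 1) = 2 from rfl,
        show ((Equiv.swap (1:Fin 3) 2) 2) = 1 from rfl]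
      ring
  · rintro ⟨c, hc, hsum, hprod⟩
    set s : Equiv.Perm (Fin 3) → ℝ := fun σ => ((Equiv.Perm.sign σ : ℤ) : ℝ) with hs
    -- the positive matrix of moduli
    set r : Fin 3 → Fin 3 → ℝ := fun i j =>
      ∏ τ : Equiv.Perm (Fin 3), (c τ) ^ ((if τ i = j then (3:ℝ)⁻¹ else 0) - 18⁻¹) with hrdef
    have hrpos : ∀ i j, 0 < r i j :=
      fun i j => Finset.prod_pos fun τ _ => Real.rpow_pos_of_pos (hc τ) _
    -- the product of c τ ^ (s τ) is 1
    have hE1 : (∏ τ : Equiv.Perm (Fin 3), (c τ) ^ (s τ)) = 1 := by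
      rw [← Finset.prod_filter_mul_prod_filter_not Finset.univ
        (fun τ : Equiv.Perm (Fin 3) => Equiv.Perm.sign τ = 1)]
      have h1 : ∀ τ ∈ Finset.univ.filter
          (fun τ : Equiv.Perm (Fin 3) => Equiv.Perm.sign τ = 1),
          (c τ) ^ (s τ) = c τ := by
        intro τ hτ
        rw [Finset.mem_filter] at hτ
        rw [hs]; simp only [hτ.2]; norm_num
      have h2 : ∀ τ ∈ Finset.univ.filter
          (fun τ : Equiv.Perm (Fin 3) => ¬ Equiv.Perm.sign τ = 1),
          (c τ) ^ (s τ) = (c τ)⁻¹ := by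
        intro τ hτ
        rw [Finset.mem_filter] at hτ
        have : Equiv.Perm.sign τ = -1 := (Int.units_eq_one_or _).resolve_left hτ.2
        rw [hs]; simp only [this]
        rw [show (((-1 : ℤˣ) : ℤ) : ℝ) = -1 by norm_num, Real.rpow_neg_one]
      rw [Finset.prod_congr rfl h1, Finset.prod_congr rfl h2]
      have hfilt : (Finset.univ.filter
          (fun τ : Equiv.Perm (Fin 3) => ¬ Equiv.Perm.sign τ = 1)) =
          (Finset.univ.filter (fun τ : Equiv.Perm (Fin 3) => Equiv.Perm.sign τ = -1)) := by
        decide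
      rw [hfilt, Finset.prod_inv_distrib, ← hprod]
      have : (0:ℝ) < ∏ σ ∈ Finset.univ.filter
          (fun σ : Equiv.Perm (Fin 3) => Equiv.Perm.sign σ = 1), c σ :=
        Finset.prod_pos fun τ _ => hc τ
      field_simp
    -- the key identity
    have key : ∀ σ : Equiv.Perm (Fin 3), (∏ i, r i (σ i)) = c σ := by
      intro σ
      rw [hrdef]
      rw [Finset.prod_comm]
      have hexp : ∀ τ : Equiv.Perm (Fin 3),
          (∏ i : Fin 3, (c τ) ^ ((if τ i = σ i then (3:ℝ)⁻¹ else 0) - 18⁻¹))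
          = (c τ) ^ ((if σ = τ then (1:ℝ) else 0) - s σ * s τ / 6) := by
        intro τ
        rw [← Real.rpow_sum_of_pos (hc τ)]
        congr 1
        have hN := aux_count σ τ
        have hcard : (∑ i : Fin 3, ((if τ i = σ i then (3:ℝ)⁻¹ else 0) - 18⁻¹))
            = ((Finset.univ.filter (fun i => τ i = σ i)).card : ℝ) * 3⁻¹ - 3 * 18⁻¹ := by
          rw [Finset.sum_sub_distrib, ← Finset.sum_filter]
          simp [mul_comm]
        rw [hcard]
        simp only [hs]
        rcases eq_or_ne σ τ with hστ | hστ
        · subst hστ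
          rw [if_pos rfl] at hN ⊢
          have hu : ((Equiv.Perm.sign σ : ℤ)) * ((Equiv.Perm.sign σ : ℤ)) = 1 := by
            rw [← Units.val_mul, Int.units_mul_self, Units.val_one]
          rw [hu] at hN
          have hc3 : ((Finset.univ.filter (fun i => σ i = σ i)).card : ℤ) = 3 := by omega
          have huR : ((Equiv.Perm.sign σ : ℤ) : ℝ) * ((Equiv.Perm.sign σ : ℤ) : ℝ) = 1 := by
            exact_mod_cast hu
          have hcR : (((Finset.univ.filter (fun i => σ i = σ i)).card : ℕ) : ℝ) = 3 := by
            exact_mod_cast hc3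
          rw [huR, hcR]
          norm_num
        · rw [if_neg hστ] at hN ⊢
          have hNR : 2 * (((Finset.univ.filter (fun i => τ i = σ i)).card : ℕ) : ℝ) - 1
              = 6 * 0 - (((Equiv.Perm.sign σ : ℤ) : ℝ) * ((Equiv.Perm.sign τ : ℤ) : ℝ)) := by
            exact_mod_cast hN
          linarith [hNR]
      rw [Finset.prod_congr rfl fun τ _ => hexp τ]
      have step : ∀ τ : Equiv.Perm (Fin 3),
          (c τ) ^ ((if σ = τ then (1:ℝ) else 0) - s σ * s τ / 6)
          = (if σ = τ then c τ else 1) / ((c τ) ^ (s τ)) ^ (s σ / 6) := by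
        intro τ
        rw [Real.rpow_sub (hc τ)]
        congr 1
        · rcases eq_or_ne σ τ with h | h
          · rw [if_pos h, if_pos h, Real.rpow_one]
          · rw [if_neg h, if_neg h, Real.rpow_zero]
        · rw [← Real.rpow_mul (le_of_lt (hc τ))]
          congr 1
          ring
      rw [Finset.prod_congr rfl fun τ _ => step τ, Finset.prod_div_distrib]
      rw [Finset.prod_ite_eq]
      rw [Real.finset_prod_rpow _ _ (fun τ _ => Real.rpow_nonneg (le_of_lt (hc τ)) _)]
      rw [hE1, Real.one_rpow]
      simp
    -- construct the matrix
    set M : Matrix (Fin 3) (Fin 3) ℂ := fun i j => ((r i j : ℝ) : ℂ) * Θ i j with hMdef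
    have hM0 : ∀ i j, M i j ≠ 0 := by
      intro i j
      apply mul_ne_zero _ (hΘne i j)
      exact_mod_cast (hrpos i j).ne'
    have hMabs : ∀ i j, (‖M i j‖ : ℝ) = r i j := by
      intro i j
      rw [hMdef]
      simp only [norm_mul, Complex.norm_real, Real.norm_eq_abs, hphase i j, mul_one]
      exact abs_of_pos (hrpos i j)
    have hMph : ∀ i j, M i j / (‖M i j‖ : ℂ) = Θ i j := by
      intro i j
      rw [hMabs, hMdef]
      have : ((r i j : ℝ) : ℂ) ≠ 0 := by exact_mod_cast (hrpos i j).ne'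
      exact mul_div_cancel_left₀ _ this
    have hdet : M.det = 0 := by
      rw [aux_det_expand, ← hsum]
      refine Finset.sum_congr rfl fun σ _ => ?_
      rw [mul_assoc]
      congr 1
      rw [← key σ]
      push_cast
      rw [← Finset.prod_mul_distrib]
    have hrank : M.rank < 3 := aux_rank_lt_three_iff_det.mpr hdet
    have hle : phaseRank Θ ≤ M.rank := Nat.sInf_le ⟨M, hM0, hMph, rfl⟩
    exact lt_of_le_of_lt hle hrank
end

section
/- Let b : Fin 3 → ℝ²\{0} (the 'blue' points) and r : Fin 3 → ℝ²\{0} (the 'red' points) be such that the origin lies in the relative interior of the convex hull of the six points b_0, b_1, b_2, r_0, r_1, r_2. Then there is a proper subset J of the six index positions that contains all three blue indices and such that the origin still lies in the relative interior of the convex hull of the points indexed by J. (By symmetry of colors, the same holds with a proper subset containing all three red indices.) -/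
open Finset Set

section relint

variable {ι : Type*} [Fintype ι]

/-- A strictly positive convex combination equal to `0` puts `0` in the relative interior. -/
lemma mem_relint_of_pos (g : ι → ℝ × ℝ) (w : ι → ℝ)
    (hw : ∀ i, 0 < w i) (h1 : ∑ i, w i = 1) (hz : ∑ i, w i • g i = 0) :
    (0 : ℝ × ℝ) ∈ intrinsicInterior ℝ (convexHull ℝ (Set.range g)) := by
  classical
  set C := convexHull ℝ (Set.range g) with hC
  have h0C : (0 : ℝ × ℝ) ∈ C := by
    have := Finset.centerMass_mem_convexHull (Finset.univ) (w := w) (z := g)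
      (fun i _ => (hw i).le) (by rw [h1]; norm_num) (fun i _ => Set.mem_range_self i)
    rwa [Finset.centerMass, h1, hz, smul_zero] at this
  set T : (ι → ℝ) →ₗ[ℝ] (ℝ × ℝ) := Fintype.linearCombination ℝ g with hT
  obtain ⟨σ, hσ⟩ := T.rangeRestrict.exists_rightInverse_of_surjective
    (LinearMap.range_rangeRestrict T ▸ rfl)
  have hσcont : Continuous σ := σ.continuous_of_finiteDimensional
  set F : ↥(LinearMap.range T) → ι → ℝ :=
    fun x i => w i + σ x i - (∑ k, σ x k) * w i with hF
  have hFcont : ∀ i, Continuous fun x => F x i := by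
    intro i
    apply Continuous.sub
    · exact continuous_const.add ((continuous_apply i).comp hσcont)
    · exact (continuous_finset_sum _ fun k _ => (continuous_apply k).comp hσcont).mul
        continuous_const
  have hU : IsOpen {x : ↥(LinearMap.range T) | ∀ i, 0 < F x i} := by
    have : {x : ↥(LinearMap.range T) | ∀ i, 0 < F x i}
        = ⋂ i, (fun x => F x i) ⁻¹' (Set.Ioi 0) := by
      ext x; simp [Set.mem_iInter]
    rw [this]
    exact isOpen_iInter_of_finite fun i => (hFcont i).isOpen_preimage _ isOpen_Ioi
  have h0U : (0 : ↥(LinearMap.range T)) ∈ {x | ∀ i, 0 < F x i} := by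
    intro i
    simp only [hF, map_zero]
    simpa using hw i
  obtain ⟨ε, hε, hball⟩ := Metric.isOpen_iff.1 hU 0 h0U
  -- key claim: any point of the span with norm < ε lies in C
  have key : ∀ z : ℝ × ℝ, z ∈ LinearMap.range T → ‖z‖ < ε → z ∈ C := by
    intro z hzmem hznorm
    set x : ↥(LinearMap.range T) := ⟨z, hzmem⟩ with hx
    have hxball : x ∈ Metric.ball (0 : ↥(LinearMap.range T)) ε := by
      rw [Metric.mem_ball, dist_zero_right]
      simpa using hznorm
    have hFpos : ∀ i, 0 < F x i := hball hxball
    have hsum : ∑ i, F x i = 1 := by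
      simp only [hF]
      rw [Finset.sum_sub_distrib, Finset.sum_add_distrib, ← Finset.mul_sum, h1]
      ring
    have hTσ : ∑ i, σ x i • g i = z := by
      have := congrArg (fun f => (f x : ℝ × ℝ)) hσ
      simp only [LinearMap.coe_comp, Function.comp_apply, LinearMap.id_coe, id_eq] at this
      have h2 : (T (σ x) : ℝ × ℝ) = z := by
        have h3 : ((T.rangeRestrict (σ x) : ↥(LinearMap.range T)) : ℝ × ℝ) = (x : ℝ × ℝ) := by
          rw [this]
        simpa [hx] using h3
      have h4 : T (σ x) = ∑ i, σ x i • g i := rfl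
      exact h4.symm.trans h2
    have hcomb : ∑ i, F x i • g i = z := by
      simp only [hF, sub_smul, add_smul, Finset.sum_sub_distrib, Finset.sum_add_distrib]
      rw [hz, hTσ]
      have : ∑ i, ((∑ k, σ x k) * w i) • g i = (∑ k, σ x k) • ∑ i, w i • g i := by
        rw [Finset.smul_sum]
        simp [mul_smul]
      rw [this, hz, smul_zero]
      simp
    have := Finset.centerMass_mem_convexHull (Finset.univ) (w := F x) (z := g)
      (fun i _ => (hFpos i).le) (by rw [hsum]; norm_num) (fun i _ => Set.mem_range_self i)
    rwa [Finset.centerMass, hsum, hcomb, inv_one, one_smul] at this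
  -- now conclude
  rw [mem_intrinsicInterior]
  refine ⟨⟨0, subset_affineSpan ℝ C h0C⟩, ?_, rfl⟩
  apply mem_interior.2
  refine ⟨(Subtype.val) ⁻¹' (Metric.ball (0 : ℝ × ℝ) ε), ?_, ?_, ?_⟩
  · intro y hy
    have hspan : (affineSpan ℝ C : Set (ℝ × ℝ)) ⊆ (Submodule.span ℝ (Set.range g) : Set (ℝ × ℝ)) := by
      rw [hC, affineSpan_convexHull]
      exact affineSpan_subset_span
    have hyspan : (y : ℝ × ℝ) ∈ Submodule.span ℝ (Set.range g) := hspan y.2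
    have hyT : (y : ℝ × ℝ) ∈ LinearMap.range T := by
      rw [hT, Fintype.range_linearCombination]; exact hyspan
    have : ‖(y : ℝ × ℝ)‖ < ε := by
      simpa [dist_zero_right] using hy
    exact key _ hyT this
  · exact continuous_subtype_val.isOpen_preimage _ Metric.isOpen_ball
  · simpa using hε

/-- From membership in the relative interior, extract a strictly positive convex
combination representing `0`. -/
lemma pos_of_mem_relint [Nonempty ι] (g : ι → ℝ × ℝ)
    (h : (0 : ℝ × ℝ) ∈ intrinsicInterior ℝ (convexHull ℝ (Set.range g))) :
    ∃ w : ι → ℝ, (∀ i, 0 < w i) ∧ ∑ i, w i = 1 ∧ ∑ i, w i • g i = 0 := by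
  classical
  set C := convexHull ℝ (Set.range g) with hC
  obtain ⟨y, hyint, hy0⟩ := mem_intrinsicInterior.1 h
  set n : ℝ := (Fintype.card ι : ℝ) with hn
  have hnpos : (0 : ℝ) < n := by
    simp [hn, Fintype.card_pos]
  set c : ℝ × ℝ := n⁻¹ • ∑ i, g i with hc
  have hcC : c ∈ C := by
    have := Finset.centerMass_mem_convexHull (Finset.univ) (w := fun _ : ι => (1 : ℝ))
      (z := g) (fun i _ => zero_le_one) (by simpa [hn] using hnpos)
      (fun i _ => Set.mem_range_self i)
    rw [Finset.centerMass] at this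
    have hsimp : ((∑ _i : ι, (1:ℝ))⁻¹ • ∑ i : ι, (1:ℝ) • g i) = c := by
      simp [hc, hn, Finset.card_univ]
    rwa [hsimp] at this
  obtain ⟨ε, hε, hball⟩ := Metric.isOpen_iff.1 isOpen_interior y hyint
  set t : ℝ := ε / (2 * (‖c‖ + 1)) with ht
  have hcnorm : (0 : ℝ) < ‖c‖ + 1 := by positivity
  have htpos : 0 < t := by positivity
  -- the point -t • c lies in the affine span
  have h0A : (0 : ℝ × ℝ) ∈ affineSpan ℝ C := hy0 ▸ y.2
  have hcA : c ∈ affineSpan ℝ C := subset_affineSpan ℝ C hcC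
  have hmemA : -t • c ∈ affineSpan ℝ C := by
    have := AffineSubspace.smul_vsub_vadd_mem (affineSpan ℝ C) (-t) hcA h0A h0A
    simpa using this
  have hz : (⟨-t • c, hmemA⟩ : affineSpan ℝ C) ∈ Metric.ball y ε := by
    rw [Metric.mem_ball, Subtype.dist_eq, hy0]
    rw [dist_eq_norm]
    simp only [sub_zero, norm_neg, norm_smul, Real.norm_eq_abs, abs_neg, abs_of_pos htpos]
    rw [ht, div_mul_eq_mul_div, div_lt_iff₀ (by positivity)]
    nlinarith [norm_nonneg c]
  have hmemC : -t • c ∈ C := by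
    have h5 := interior_subset (hball hz)
    exact h5
  -- extract convex combination for -t • c
  rw [hC, convexHull_range_eq_exists_affineCombination] at hmemC
  obtain ⟨s, θ, hθ0, hθ1, hθc⟩ := hmemC
  rw [Finset.affineCombination_eq_linear_combination s g θ hθ1] at hθc
  set θ' : ι → ℝ := fun i => if i ∈ s then θ i else 0 with hθ'
  have hθ'0 : ∀ i, 0 ≤ θ' i := by
    intro i; rw [hθ']; dsimp only
    split
    · exact hθ0 _ ‹_›
    · exact le_refl 0
  have hθ'1 : ∑ i, θ' i = 1 := by
    rw [hθ', ← hθ1]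
    simp [Finset.sum_ite_mem]
  have hθ'c : ∑ i, θ' i • g i = -t • c := by
    rw [← hθc, hθ']
    simp only [ite_smul, zero_smul]
    rw [Finset.sum_ite_mem]
    simp
  -- final weights
  refine ⟨fun i => (1 / (1 + t)) * θ' i + (t / (1 + t)) * n⁻¹, ?_, ?_, ?_⟩
  · intro i
    have h1t : (0:ℝ) < 1 + t := by linarith
    have : 0 < (t / (1 + t)) * n⁻¹ := by positivity
    nlinarith [hθ'0 i, mul_nonneg (by positivity : (0:ℝ) ≤ 1 / (1+t)) (hθ'0 i)]
  · rw [Finset.sum_add_distrib, ← Finset.mul_sum, hθ'1, ← Finset.mul_sum]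
    simp only [Finset.sum_const, Finset.card_univ, nsmul_eq_mul]
    rw [← hn]
    field_simp
  · have expand : ∀ i, ((1 / (1 + t)) * θ' i + (t / (1 + t)) * n⁻¹) • g i
        = (1 / (1 + t)) • (θ' i • g i) + ((t / (1 + t)) * n⁻¹) • g i := by
      intro i; rw [add_smul, smul_smul]
    simp_rw [expand]
    rw [Finset.sum_add_distrib, ← Finset.smul_sum, hθ'c]
    have h6 : ∑ i, ((t / (1 + t)) * n⁻¹) • g i = (t / (1 + t)) • c := by
      rw [hc, ← Finset.smul_sum, smul_smul]
    rw [h6, smul_smul, ← add_smul]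
    have h1t : (0:ℝ) < 1 + t := by positivity
    have h7 : 1 / (1 + t) * -t + t / (1 + t) = 0 := by
      field_simp
      ring
    rw [h7, zero_smul]
/-- Key linear-algebra step: zero out the coefficient of one "red" point. -/
lemma drop_one (p : Fin 3 ⊕ Fin 3 → ℝ × ℝ) (w : Fin 3 ⊕ Fin 3 → ℝ)
    (hw : ∀ i, 0 < w i) (hz : ∑ i, w i • p i = 0) :
    ∃ v : Fin 3 ⊕ Fin 3 → ℝ, (∀ i, 0 ≤ v i) ∧ (∀ i, 0 < v (Sum.inl i)) ∧
      (∃ j, v (Sum.inr j) = 0) ∧ ∑ i, v i • p i = 0 := by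
  classical
  set r : Fin 3 → ℝ × ℝ := fun j => p (Sum.inr j) with hrdef
  -- three vectors in ℝ² are linearly dependent
  have hdep : ¬ LinearIndependent ℝ r := by
    intro hLI
    have := hLI.fintype_card_le_finrank
    rw [Fintype.card_fin] at this
    have h2 : Module.finrank ℝ (ℝ × ℝ) = 2 := by
      simp [Module.finrank_prod]
    omega
  obtain ⟨α, hαsum, j₁, hj₁⟩ := Fintype.not_linearIndependent_iff.1 hdep
  -- WLOG some coefficient is positive
  obtain ⟨α, hαsum, j₂, hj₂⟩ :
      ∃ α : Fin 3 → ℝ, ∑ j, α j • r j = 0 ∧ ∃ j, 0 < α j := by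
    rcases lt_trichotomy (α j₁) 0 with hneg | h0 | hpos
    · refine ⟨-α, ?_, j₁, by simpa using hneg⟩
      simp only [Pi.neg_apply, neg_smul, Finset.sum_neg_distrib, hαsum, neg_zero]
    · exact absurd h0 hj₁.elim
    · exact ⟨α, hαsum, j₁, hpos⟩
  set P : Finset (Fin 3) := Finset.univ.filter (fun j => 0 < α j) with hP
  have hPne : P.Nonempty := ⟨j₂, by simp [hP, hj₂]⟩
  obtain ⟨j₀, hj₀P, hj₀min⟩ := P.exists_min_image (fun j => w (Sum.inr j) / α j) hPne
  have hαj₀ : 0 < α j₀ := by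
    simpa [hP] using hj₀P
  set t : ℝ := w (Sum.inr j₀) / α j₀ with htdef
  have htpos : 0 < t := div_pos (hw _) hαj₀
  set v : Fin 3 ⊕ Fin 3 → ℝ := Sum.elim (fun i => w (Sum.inl i))
    (fun j => w (Sum.inr j) - t * α j) with hv
  have hvr : ∀ j, 0 ≤ v (Sum.inr j) := by
    intro j
    simp only [hv, Sum.elim_inr, sub_nonneg]
    rcases le_or_gt (α j) 0 with hle | hlt
    · calc t * α j ≤ 0 := mul_nonpos_of_nonneg_of_nonpos htpos.le hle
      _ ≤ w (Sum.inr j) := (hw _).le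
    · have hjP : j ∈ P := by simp [hP, hlt]
      have := hj₀min j hjP
      calc t * α j ≤ (w (Sum.inr j) / α j) * α j := by
            exact mul_le_mul_of_nonneg_right this hlt.le
      _ = w (Sum.inr j) := div_mul_cancel₀ _ hlt.ne'
  refine ⟨v, ?_, ?_, ⟨j₀, ?_⟩, ?_⟩
  · rintro (i | j)
    · exact (hw _).le
    · exact hvr j
  · intro i; exact hw _
  · simp only [hv, Sum.elim_inr, htdef]
    field_simp
    ring
  · rw [Fintype.sum_sum_type] at hz ⊢
    simp only [hv, Sum.elim_inl, Sum.elim_inr, sub_smul, Finset.sum_sub_distrib]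
    have : ∑ j : Fin 3, (t * α j) • p (Sum.inr j) = t • ∑ j, α j • r j := by
      rw [Finset.smul_sum]
      simp [mul_smul, hrdef]
    rw [this, hαsum, smul_zero, sub_zero, hz]

set_option maxHeartbeats 1000000 in
/-- Packaging: from suitable coefficients build the required subset. -/
lemma pack (p : Fin 3 ⊕ Fin 3 → ℝ × ℝ) (v : Fin 3 ⊕ Fin 3 → ℝ)
    (hv0 : ∀ i, 0 ≤ v i) (hbl : ∀ i, 0 < v (Sum.inl i)) (hj : ∃ j, v (Sum.inr j) = 0)
    (hz : ∑ i, v i • p i = 0) :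
    ∃ J : Finset (Fin 3 ⊕ Fin 3), J ≠ Finset.univ ∧ (∀ i : Fin 3, Sum.inl i ∈ J) ∧
      (0 : ℝ × ℝ) ∈ intrinsicInterior ℝ (convexHull ℝ (p '' J)) := by
  classical
  set J : Finset (Fin 3 ⊕ Fin 3) := Finset.univ.filter (fun i => v i ≠ 0) with hJ
  obtain ⟨j₀, hj₀⟩ := hj
  have hj₀J : Sum.inr j₀ ∉ J := by simp [hJ, hj₀]
  have hJmem : ∀ i ∈ J, 0 < v i := by
    intro i hi
    rcases (hv0 i).lt_or_eq with h | h
    · exact h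
    · exact absurd h.symm (by simpa [hJ] using hi)
  have hblJ : ∀ i : Fin 3, Sum.inl i ∈ J := by
    intro i; simp [hJ, (hbl i).ne']
  have hS : 0 < ∑ i ∈ J, v i :=
    Finset.sum_pos hJmem ⟨Sum.inl 0, hblJ 0⟩
  set S : ℝ := ∑ i ∈ J, v i with hSdef
  refine ⟨J, fun h => hj₀J (h ▸ Finset.mem_univ _), hblJ, ?_⟩
  have himg : p '' ↑J = Set.range (fun x : ↥(↑J : Set (Fin 3 ⊕ Fin 3)) => p ↑x) :=
    Set.image_eq_range _ _
  rw [himg]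
  apply mem_relint_of_pos (g := fun x : (↑J : Set (Fin 3 ⊕ Fin 3)) => p ↑x)
    (w := fun x => v ↑x / S)
  · intro x
    exact div_pos (hJmem _ (Finset.mem_coe.1 x.2)) hS
  · rw [← Finset.sum_div]
    rw [Finset.sum_finset_coe (fun i => v i) J]
    field_simp
    exact hSdef.symm
  · have : ∑ x : ↥(↑J : Set (Fin 3 ⊕ Fin 3)), (v ↑x / S) • p ↑x
        = S⁻¹ • ∑ x : ↥(↑J : Set (Fin 3 ⊕ Fin 3)), v ↑x • p ↑x := by
      rw [Finset.smul_sum]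
      refine Finset.sum_congr rfl fun x _ => ?_
      rw [smul_smul, div_eq_inv_mul]
    rw [this, Finset.sum_finset_coe (fun i => v i • p i) J]
    have : ∑ i ∈ J, v i • p i = ∑ i, v i • p i := by
      apply Finset.sum_subset (Finset.subset_univ J)
      intro i _ hiJ
      have : v i = 0 := by
        by_contra hne
        exact hiJ (by simp [hJ, hne])
      simp [this]
    rw [this, hz, smul_zero]

end relint
/-- Given 3 blue points and 3 red points in `ℝ² \ {0}` whose convex hull has the origin in
its relative interior, one can find a proper subset of the six index positions containing
all blue indices (and, symmetrically, one containing all red indices) whose convex hull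
still has the origin in its relative interior. -/
theorem exists_proper_subset_containing_blue_points
    (b r : Fin 3 → ℝ × ℝ)
    (hb : ∀ i, b i ≠ 0) (hr : ∀ i, r i ≠ 0)
    (h0 : (0 : ℝ × ℝ) ∈ intrinsicInterior ℝ
      (convexHull ℝ (Set.range (Sum.elim b r : Fin 3 ⊕ Fin 3 → ℝ × ℝ)))) :
    (∃ J : Finset (Fin 3 ⊕ Fin 3), J ≠ Finset.univ ∧
      (∀ i : Fin 3, Sum.inl i ∈ J) ∧
      (0 : ℝ × ℝ) ∈ intrinsicInterior ℝ
        (convexHull ℝ ((Sum.elim b r : Fin 3 ⊕ Fin 3 → ℝ × ℝ) '' J))) ∧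
    (∃ K : Finset (Fin 3 ⊕ Fin 3), K ≠ Finset.univ ∧
      (∀ i : Fin 3, Sum.inr i ∈ K) ∧
      (0 : ℝ × ℝ) ∈ intrinsicInterior ℝ
        (convexHull ℝ ((Sum.elim b r : Fin 3 ⊕ Fin 3 → ℝ × ℝ) '' K))) := by
  classical
  set p : Fin 3 ⊕ Fin 3 → ℝ × ℝ := Sum.elim b r with hp
  obtain ⟨w, hwpos, hwsum, hwz⟩ := pos_of_mem_relint p h0
  constructor
  · obtain ⟨v, hv0, hvbl, hvj, hvz⟩ := drop_one p w hwpos hwz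
    exact pack p v hv0 hvbl hvj hvz
  · -- swap the two copies of `Fin 3`
    set e : (Fin 3 ⊕ Fin 3) ≃ (Fin 3 ⊕ Fin 3) := Equiv.sumComm (Fin 3) (Fin 3) with he
    have hwz' : ∑ i, (w ∘ e) i • (p ∘ e) i = 0 := by
      rw [show (∑ i, (w ∘ e) i • (p ∘ e) i) = ∑ i, (fun i => w i • p i) (e i) from rfl,
        Equiv.sum_comp e (fun i => w i • p i)]
      exact hwz
    obtain ⟨v, hv0, hvbl, hvj, hvz⟩ := drop_one (p ∘ e) (w ∘ e)
      (fun i => hwpos _) hwz'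
    obtain ⟨J, hJne, hJmem, hJrel⟩ := pack (p ∘ e) v hv0 hvbl hvj hvz
    refine ⟨J.map e.toEmbedding, ?_, ?_, ?_⟩
    · intro h
      apply hJne
      apply Finset.eq_univ_of_card
      have := congrArg Finset.card h
      rwa [Finset.card_map] at this
    · intro i
      rw [Finset.mem_map]
      exact ⟨Sum.inl i, hJmem i, rfl⟩
    · have : (p '' ↑(J.map e.toEmbedding)) = (p ∘ e) '' ↑J := by
        rw [Finset.coe_map, Set.image_image]
        rfl
      rw [this]
      exact hJrel
end

section
/- Let Θ be an n×n phase matrix and suppose that the origin does not lie in the relative interior of the convex hull (in ℝ² ≅ ℂ) of the n! points sgn(σ)·∏_{i=1}^{n} Θ_{i,σ(i)}, σ ranging over the permutations of {1,…,n} (i.e., the determinant is colopsided at Θ). Then rank_phase(Θ) = n; in particular, every complex n×n matrix with all entries nonzero whose entrywise phases equal Θ is nonsingular. -/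
set_option maxHeartbeats 1000000

open Finset

private noncomputable def comboMap {ι : Type*} [Fintype ι] (w : ι → ℂ) : (ι → ℝ) →ₗ[ℝ] ℂ where
  toFun d := ∑ i, d i • w i
  map_add' a b := by simp [add_smul, Finset.sum_add_distrib]
  map_smul' r a := by simp [Finset.smul_sum, mul_smul]

private lemma comboMap_apply {ι : Type*} [Fintype ι] (w : ι → ℂ) (d : ι → ℝ) :
    comboMap w d = ∑ i, d i • w i := rfl

private lemma combo_mem_convexHull {ι : Type*} [Fintype ι] (w : ι → ℂ) (b : ι → ℝ)
    (hb : ∀ i, 0 ≤ b i) (hsum : ∑ i, b i = 1) :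
    ∑ i, b i • w i ∈ convexHull ℝ (Set.range w) :=
  (convex_convexHull ℝ _).sum_mem (fun i _ => hb i) hsum
    (fun i _ => subset_convexHull ℝ _ (Set.mem_range_self i))

private lemma zero_mem_intrinsicInterior {ι : Type*} [Fintype ι] [Nonempty ι]
    (w : ι → ℂ) (c : ι → ℝ) (hc : ∀ i, 0 < c i) (hsum : ∑ i, c i = 1)
    (hzero : ∑ i, c i • w i = 0) :
    (0 : ℂ) ∈ intrinsicInterior ℝ (convexHull ℝ (Set.range w)) := by
  classical
  set S : Set ℂ := Set.range w with hS
  have h0conv : (0 : ℂ) ∈ convexHull ℝ S := by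
    rw [← hzero]; exact combo_mem_convexHull w c (fun i => (hc i).le) hsum
  set D : Submodule ℝ ℂ := Submodule.span ℝ S with hD
  have hmem : ∀ d : ι → ℝ, comboMap w d ∈ D := fun d =>
    Submodule.sum_mem _ fun i _ =>
      Submodule.smul_mem _ _ (Submodule.subset_span (Set.mem_range_self i))
  set T : (ι → ℝ) →ₗ[ℝ] D := LinearMap.codRestrict D (comboMap w) hmem with hT
  have hTsurj : LinearMap.range T = ⊤ := by
    rw [LinearMap.range_eq_top]
    rintro ⟨z, hz⟩
    obtain ⟨d, hd⟩ := (Submodule.mem_span_range_iff_exists_fun ℝ).1 hz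
    exact ⟨d, Subtype.ext hd⟩
  obtain ⟨g, hg⟩ := LinearMap.exists_rightInverse_of_surjective T hTsurj
  set G := LinearMap.toContinuousLinearMap g with hG
  set K : ℝ := ‖G‖ * (1 + Fintype.card ι) with hK
  have hK0 : 0 ≤ K := by positivity
  obtain ⟨i₀⟩ := ‹Nonempty ι›
  set cmin : ℝ := Finset.univ.inf' (⟨i₀, Finset.mem_univ i₀⟩ : Finset.univ.Nonempty) c with hcmin
  have hcminpos : 0 < cmin := by
    rw [hcmin]; exact (Finset.lt_inf'_iff _).2 fun i _ => hc i
  have hcminle : ∀ i, cmin ≤ c i := fun i => Finset.inf'_le _ (Finset.mem_univ i)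
  set ε : ℝ := cmin / (K + 1) with hε
  have hεpos : 0 < ε := by positivity
  have key : ∀ z : ℂ, z ∈ D → ‖z‖ < ε → z ∈ convexHull ℝ S := by
    intro z hz hznorm
    set d₀ : ι → ℝ := g ⟨z, hz⟩ with hd₀
    have hTd₀ : ∑ i, d₀ i • w i = z := by
      have h := congrArg Subtype.val (LinearMap.congr_fun hg ⟨z, hz⟩)
      rw [LinearMap.comp_apply, hT, LinearMap.codRestrict_apply, comboMap_apply] at h
      exact h
    have hd₀norm : ‖d₀‖ ≤ ‖G‖ * ‖z‖ := by
      have h := G.le_opNorm ⟨z, hz⟩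
      have h2 : ‖(⟨z, hz⟩ : D)‖ = ‖z‖ := rfl
      have h3 : G ⟨z, hz⟩ = d₀ := rfl
      rw [h2, h3] at h
      exact h
    set s : ℝ := ∑ i, d₀ i with hs
    have hd₀i : ∀ i, |d₀ i| ≤ ‖d₀‖ := fun i => by
      simpa [Real.norm_eq_abs] using norm_le_pi_norm d₀ i
    have hsabs : |s| ≤ (Fintype.card ι : ℝ) * ‖d₀‖ := by
      calc |s| ≤ ∑ i, |d₀ i| := Finset.abs_sum_le_sum_abs _ _
        _ ≤ ∑ _i : ι, ‖d₀‖ := Finset.sum_le_sum fun i _ => hd₀i i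
        _ = (Fintype.card ι : ℝ) * ‖d₀‖ := by simp [mul_comm]
    set d : ι → ℝ := fun i => d₀ i - s * c i with hd
    have hcle1 : ∀ i, c i ≤ 1 := by
      intro i
      rw [← hsum]
      exact Finset.single_le_sum (fun j _ => (hc j).le) (Finset.mem_univ i)
    have hdsmall : ∀ i, |d i| < c i := by
      intro i
      have h1 : |d i| ≤ ‖d₀‖ + |s| * c i := by
        calc |d i| = |d₀ i - s * c i| := rfl
          _ ≤ |d₀ i| + |s| * |c i| := by
              simpa [Real.norm_eq_abs, abs_mul] using norm_sub_le (d₀ i) (s * c i)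
          _ = |d₀ i| + |s| * c i := by rw [abs_of_pos (hc i)]
          _ ≤ ‖d₀‖ + |s| * c i := add_le_add_left (hd₀i i) _
      have h2 : |d i| ≤ K * ‖z‖ := by
        calc |d i| ≤ ‖d₀‖ + |s| * c i := h1
          _ ≤ ‖G‖ * ‖z‖ + ((Fintype.card ι : ℝ) * (‖G‖ * ‖z‖)) * 1 := by
              refine add_le_add hd₀norm ?_
              refine mul_le_mul ?_ (hcle1 i) (hc i).le (by positivity)
              exact le_trans hsabs (mul_le_mul_of_nonneg_left hd₀norm (by positivity))
          _ = K * ‖z‖ := by rw [hK]; ring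
      calc |d i| ≤ K * ‖z‖ := h2
        _ ≤ K * ε := mul_le_mul_of_nonneg_left hznorm.le hK0
        _ < (K + 1) * ε := by nlinarith
        _ = cmin := by rw [hε]; field_simp
        _ ≤ c i := hcminle i
    set b : ι → ℝ := fun i => c i + d i with hb
    have hbnn : ∀ i, 0 ≤ b i := fun i => by
      have h := abs_lt.1 (hdsmall i)
      simp only [hb]; linarith [h.1]
    have hbsum : ∑ i, b i = 1 := by
      simp only [hb, hd]
      rw [Finset.sum_add_distrib, Finset.sum_sub_distrib, ← Finset.mul_sum, hsum, ← hs]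
      ring
    have hbval : ∑ i, b i • w i = z := by
      have expand : ∀ i, b i • w i = c i • w i + (d₀ i • w i - s • (c i • w i)) := by
        intro i
        simp only [hb, hd]
        rw [add_smul, sub_smul, mul_smul]
      rw [Finset.sum_congr rfl fun i _ => expand i, Finset.sum_add_distrib,
        Finset.sum_sub_distrib, ← Finset.smul_sum, hzero, hTd₀, smul_zero, sub_zero, zero_add]
    rw [← hbval]
    exact combo_mem_convexHull w b hbnn hbsum
  rw [mem_intrinsicInterior]
  have h0A : (0 : ℂ) ∈ affineSpan ℝ (convexHull ℝ S) :=
    subset_affineSpan ℝ (convexHull ℝ S) h0conv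
  refine ⟨⟨0, h0A⟩, ?_, rfl⟩
  rw [mem_interior_iff_mem_nhds, Metric.mem_nhds_iff]
  refine ⟨ε, hεpos, ?_⟩
  rintro ⟨y, hy⟩ hymem
  have hynorm : ‖y‖ < ε := by
    simpa [Metric.mem_ball, Subtype.dist_eq, dist_eq_norm] using hymem
  have hyD : y ∈ D := by
    have hdir : y -ᵥ (0 : ℂ) ∈ (affineSpan ℝ (convexHull ℝ S)).direction :=
      AffineSubspace.vsub_mem_direction hy h0A
    rw [direction_affineSpan] at hdir
    have hvs : vectorSpan ℝ (convexHull ℝ S) = vectorSpan ℝ S := by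
      rw [← direction_affineSpan, ← direction_affineSpan, affineSpan_convexHull]
    rw [hvs] at hdir
    have h2 : y ∈ vectorSpan ℝ S := by simpa using hdir
    have h3 : vectorSpan ℝ S ≤ D := by
      rw [vectorSpan_def]
      refine Submodule.span_le.2 ?_
      rintro x ⟨a, ha, b2, hb2, rfl⟩
      exact Submodule.sub_mem _ (Submodule.subset_span ha) (Submodule.subset_span hb2)
    exact h3 h2
  exact key y hyD hynorm


/-- If the determinant is colopsided at an `n × n` phase matrix `Θ`, i.e., the origin is
not in the relative interior of the convex hull of the `n!` signed determinant monomials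
evaluated at `Θ`, then `Θ` has maximal phase rank `n`; in particular, every complex matrix
with nonzero entries and the same phases is nonsingular. -/
theorem phaseRank_eq_of_colopsided {n : ℕ}
    (Θ : Matrix (Fin n) (Fin n) ℂ) (hphase : ∀ i j, ‖Θ i j‖ = 1)
    (hcolop : (0 : ℂ) ∉ intrinsicInterior ℝ (convexHull ℝ
      {w : ℂ | ∃ σ : Equiv.Perm (Fin n),
        w = ((Equiv.Perm.sign σ : ℤ) : ℂ) * ∏ i, Θ i (σ i)})) :
    phaseRank Θ = n ∧
      ∀ M : Matrix (Fin n) (Fin n) ℂ, (∀ i j, M i j ≠ 0) →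
        (∀ i j, M i j / (‖M i j‖ : ℂ) = Θ i j) → M.det ≠ 0 := by
  classical
  haveI : Nonempty (Equiv.Perm (Fin n)) := ⟨1⟩
  set w : Equiv.Perm (Fin n) → ℂ :=
    fun σ => ((Equiv.Perm.sign σ : ℤ) : ℂ) * ∏ i, Θ i (σ i) with hw
  have hset : {w' : ℂ | ∃ σ : Equiv.Perm (Fin n),
      w' = ((Equiv.Perm.sign σ : ℤ) : ℂ) * ∏ i, Θ i (σ i)} = Set.range w :=
    Set.ext fun x => ⟨fun ⟨σ, h⟩ => ⟨σ, h.symm⟩, fun ⟨σ, h⟩ => ⟨σ, h.symm⟩⟩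
  rw [hset] at hcolop
  have hdet : ∀ M : Matrix (Fin n) (Fin n) ℂ, (∀ i j, M i j ≠ 0) →
      (∀ i j, M i j / (‖M i j‖ : ℂ) = Θ i j) → M.det ≠ 0 := by
    intro M hnz hph hdet0
    have habs : ∀ i j, ((‖M i j‖ : ℝ) : ℂ) ≠ 0 := by
      intro i j
      simpa using hnz i j
    have hentry : ∀ i j, M i j = ((‖M i j‖ : ℝ) : ℂ) * Θ i j := by
      intro i j
      have h := hph i j
      rw [← h]
      rw [mul_comm]
      exact (div_mul_cancel₀ _ (habs i j)).symm
    set c' : Equiv.Perm (Fin n) → ℝ := fun σ => ∏ i, ‖M i (σ i)‖ with hc'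
    have hc'pos : ∀ σ, 0 < c' σ := fun σ =>
      Finset.prod_pos fun i _ => (norm_pos_iff.2 (hnz i (σ i)))
    have hdetsum : M.det = ∑ σ : Equiv.Perm (Fin n), c' σ • w σ := by
      rw [← Matrix.det_transpose, Matrix.det_apply]
      refine Finset.sum_congr rfl fun σ _ => ?_
      have hprod : ∏ i, M.transpose (σ i) i
          = ∏ i, ((‖M i (σ i)‖ : ℝ) : ℂ) * Θ i (σ i) := by
        refine Finset.prod_congr rfl fun i _ => ?_
        rw [Matrix.transpose_apply]
        exact hentry i (σ i)
      rw [hprod, Finset.prod_mul_distrib]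
      rw [hw]
      simp only [Units.smul_def, zsmul_eq_mul]
      rw [Complex.real_smul, hc']
      push_cast
      ring
    set t : ℝ := ∑ σ : Equiv.Perm (Fin n), c' σ with ht
    have htpos : 0 < t :=
      Finset.sum_pos (fun σ _ => hc'pos σ) Finset.univ_nonempty
    set c : Equiv.Perm (Fin n) → ℝ := fun σ => c' σ / t with hc
    have hcpos : ∀ σ, 0 < c σ := fun σ => div_pos (hc'pos σ) htpos
    have hcsum : ∑ σ, c σ = 1 := by
      rw [hc]
      rw [← Finset.sum_div, ← ht, div_self htpos.ne']
    have hczero : ∑ σ, c σ • w σ = 0 := by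
      have hstep : ∑ σ, c σ • w σ = t⁻¹ • ∑ σ, c' σ • w σ := by
        rw [Finset.smul_sum]
        refine Finset.sum_congr rfl fun σ _ => ?_
        show (c' σ / t) • w σ = t⁻¹ • c' σ • w σ
        rw [div_eq_inv_mul, mul_smul]
      rw [hstep, ← hdetsum, hdet0, smul_zero]
    exact hcolop (zero_mem_intrinsicInterior w c hcpos hcsum hczero)
  refine ⟨?_, hdet⟩
  have hθnz : ∀ i j, Θ i j ≠ 0 := by
    intro i j h
    have := hphase i j
    rw [h] at this
    simp at this
  have hθph : ∀ i j, Θ i j / (‖Θ i j‖ : ℂ) = Θ i j := by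
    intro i j
    rw [hphase i j]
    simp
  have hrank : ∀ M : Matrix (Fin n) (Fin n) ℂ, (∀ i j, M i j ≠ 0) →
      (∀ i j, M i j / (‖M i j‖ : ℂ) = Θ i j) → M.rank = n := by
    intro M hnz hph
    have hdM : M.det ≠ 0 := hdet M hnz hph
    have := Matrix.rank_of_isUnit M ((Matrix.isUnit_iff_isUnit_det M).2 (isUnit_iff_ne_zero.2 hdM))
    simpa using this
  have hRset : {r | ∃ M : Matrix (Fin n) (Fin n) ℂ,
      (∀ i j, M i j ≠ 0) ∧ (∀ i j, M i j / (‖M i j‖ : ℂ) = Θ i j) ∧ M.rank = r} = {n} := by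
    ext r
    constructor
    · rintro ⟨M, h1, h2, h3⟩
      rw [Set.mem_singleton_iff, ← h3]
      exact (hrank M h1 h2).symm ▸ rfl
    · rintro rfl
      exact ⟨Θ, hθnz, hθph, hrank Θ hθnz hθph⟩
  rw [phaseRank, hRset, csInf_singleton]
end

section
/- Let f = ∑_α b_α z^α be a nonzero polynomial in n complex variables (b_α ∈ ℂ \ {0} for α in the support of f), and let φ ∈ (S¹)^n. If f is colopsided at φ, i.e., the origin does not lie in the relative interior of the convex hull (in ℝ² ≅ ℂ) of the points (b_α/|b_α|)·φ^α taken over all exponents α in the support of f, then f(z) ≠ 0 for every z ∈ (ℂ*)^n with z_i/|z_i| = φ_i for all i. (Equivalently, a point φ of the coamoeba of the hypersurface f = 0 cannot make f colopsided.) -/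
open Finset Set

lemma zero_mem_intrinsicInterior_of_pos_combo (t : Finset ℂ) (ht : t.Nonempty)
    (c : ℂ → ℝ) (hc : ∀ w ∈ t, 0 < c w) (hsum : ∑ w ∈ t, c w = 1)
    (hzero : ∑ w ∈ t, c w • w = 0) :
    (0 : ℂ) ∈ intrinsicInterior ℝ (convexHull ℝ (t : Set ℂ)) := by
  classical
  set S : Set ℂ := (t : Set ℂ) with hS
  set m : ℝ := t.inf' ht c with hmdef
  have hm : 0 < m := (Finset.lt_inf'_iff ht).2 hc
  -- linear maps
  let L : (↥t → ℝ) →ₗ[ℝ] ℂ :=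
    { toFun := fun u => ∑ w : ↥t, u w • (w : ℂ)
      map_add' := by intro u v; simp [add_smul, Finset.sum_add_distrib]
      map_smul' := by intro r u; simp [mul_smul, Finset.smul_sum]
    }
  let Sl : (↥t → ℝ) →ₗ[ℝ] ℝ :=
    { toFun := fun u => ∑ w : ↥t, u w
      map_add' := by intro u v; simp [Finset.sum_add_distrib]
      map_smul' := by intro r u; simp [Finset.mul_sum]
    }
  let H : Submodule ℝ (↥t → ℝ) := LinearMap.ker Sl
  let W : Submodule ℝ ℂ := Submodule.span ℝ S
  have hLW : ∀ u, L u ∈ W := fun u =>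
    Submodule.sum_smul_mem _ _ (fun w _ => Submodule.subset_span w.2)
  let Lr : H →ₗ[ℝ] W := LinearMap.codRestrict W (L.comp H.subtype) (fun u => hLW _)
  have hsurj : Function.Surjective Lr := by
    rintro ⟨y, hy⟩
    rw [Submodule.mem_span_finset] at hy
    obtain ⟨a, -, ha⟩ := hy
    set A : ℝ := ∑ w ∈ t, a w with hA
    have hker : (fun w : ↥t => a ↑w - A * c ↑w) ∈ H := by
      show ∑ w : ↥t, (a ↑w - A * c ↑w) = 0
      rw [Finset.sum_sub_distrib, ← Finset.mul_sum]
      rw [Finset.sum_coe_sort t a, Finset.sum_coe_sort t c, hsum]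
      ring
    refine ⟨⟨_, hker⟩, ?_⟩
    apply Subtype.ext
    show ∑ w : ↥t, (a ↑w - A * c ↑w) • (w : ℂ) = y
    have : ∀ w : ↥t, (a ↑w - A * c ↑w) • (w : ℂ)
        = a ↑w • (w : ℂ) - A • (c ↑w • (w : ℂ)) := by
      intro w; rw [sub_smul, smul_smul]
    simp only [this]
    rw [Finset.sum_sub_distrib, ← Finset.smul_sum]
    rw [Finset.sum_coe_sort t (fun w => a w • w),
      Finset.sum_coe_sort t (fun w => c w • w), hzero, ha]
    simp
  have hopen : IsOpenMap Lr := LinearMap.isOpenMap_of_finiteDimensional Lr hsurj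
  -- elements in the image of the small ball are in the convex hull
  have hball : ∀ u : H, ‖u‖ < m → L (u : ↥t → ℝ) ∈ convexHull ℝ S := by
    intro u hu
    have hwpos : ∀ w : ↥t, 0 < c ↑w + (u : ↥t → ℝ) w := by
      intro w
      have hu' : ‖(u : ↥t → ℝ)‖ < m := hu
      have h2 : |(u : ↥t → ℝ) w| < m := by
        have := lt_of_le_of_lt (norm_le_pi_norm (u : ↥t → ℝ) w) hu'
        simpa [Real.norm_eq_abs] using this
      have h3 : m ≤ c ↑w := Finset.inf'_le _ w.2
      have := abs_lt.1 h2
      linarith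
    have hsum1 : ∑ w : ↥t, (c ↑w + (u : ↥t → ℝ) w) = 1 := by
      rw [Finset.sum_add_distrib, Finset.sum_coe_sort t c, hsum]
      have : ∑ w : ↥t, (u : ↥t → ℝ) w = 0 := u.2
      rw [this]; ring
    have hmem := Finset.centerMass_mem_convexHull (univ : Finset ↥t)
      (w := fun w => c ↑w + (u : ↥t → ℝ) w) (fun w _ => (hwpos w).le)
      (by rw [hsum1]; norm_num) (z := fun w => (w : ℂ)) (fun w _ => w.2)
    rwa [Finset.centerMass_eq_of_sum_1 _ _ hsum1, show ∑ w : ↥t,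
      (c ↑w + (u : ↥t → ℝ) w) • (w : ℂ) = L (u : ↥t → ℝ) by
        simp only [add_smul, Finset.sum_add_distrib]
        rw [Finset.sum_coe_sort t (fun w => c w • w), hzero, zero_add]; rfl] at hmem
  -- get an epsilon
  have hOopen : IsOpen (Lr '' Metric.ball 0 m) := hopen _ Metric.isOpen_ball
  obtain ⟨V, hVopen, hOV⟩ := isOpen_induced_iff.1 hOopen
  have h0O : (0 : W) ∈ Lr '' Metric.ball 0 m :=
    ⟨0, by simpa using hm, by simp⟩
  have h0V : (0 : ℂ) ∈ V := by
    rw [← hOV] at h0O; exact h0O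
  obtain ⟨ε, hε, hballV⟩ := Metric.isOpen_iff.1 hVopen 0 h0V
  -- affine span is contained in W
  have hspan : ∀ x : ℂ, x ∈ affineSpan ℝ (convexHull ℝ S) → x ∈ W := by
    intro x hx
    have hsub : convexHull ℝ S ⊆ (W.toAffineSubspace : Set ℂ) := by
      refine convexHull_min ?_ W.convex
      exact fun w hw => Submodule.mem_toAffineSubspace.2 (Submodule.subset_span hw)
    have hle : affineSpan ℝ (convexHull ℝ S) ≤ W.toAffineSubspace := affineSpan_le.2 hsub
    exact Submodule.mem_toAffineSubspace.1 (hle hx)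
  have hkey : ∀ x : ℂ, x ∈ affineSpan ℝ (convexHull ℝ S) → ‖x‖ < ε → x ∈ convexHull ℝ S := by
    intro x hx hxε
    have hxW : x ∈ W := hspan x hx
    have hxV : x ∈ V := hballV (by simpa [Metric.mem_ball] using hxε)
    have : (⟨x, hxW⟩ : W) ∈ Lr '' Metric.ball 0 m := by
      rw [← hOV]; exact hxV
    obtain ⟨u, hu, hux⟩ := this
    have hux' : L (u : ↥t → ℝ) = x := congrArg Subtype.val hux
    rw [← hux']
    exact hball u (by simpa [mem_ball_zero_iff] using hu)
  -- conclude
  have h0hull : (0 : ℂ) ∈ convexHull ℝ S := by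
    have hmem := Finset.centerMass_mem_convexHull (univ : Finset ↥t)
      (w := fun w => c ↑w) (fun w _ => (hc _ w.2).le)
      (by rw [Finset.sum_coe_sort t c, hsum]; norm_num) (z := fun w => (w : ℂ)) (fun w _ => w.2)
    rwa [Finset.centerMass_eq_of_sum_1 _ _ (by rw [Finset.sum_coe_sort t c, hsum]),
      Finset.sum_coe_sort t (fun w => c w • w), hzero] at hmem
  have h0span : (0 : ℂ) ∈ affineSpan ℝ (convexHull ℝ S) := subset_affineSpan ℝ _ h0hull
  rw [mem_intrinsicInterior]
  refine ⟨⟨0, h0span⟩, ?_, rfl⟩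
  rw [mem_interior]
  refine ⟨{y : affineSpan ℝ ((convexHull ℝ) S) | ‖(y : ℂ)‖ < ε}, ?_, ?_, by simpa using hε⟩
  · intro y hy
    exact hkey y y.2 hy
  · exact isOpen_lt continuous_subtype_val.norm continuous_const

/-- (Colopsidedness criterion for coamoebas.) Let `f` be a nonzero polynomial in `n`
complex variables and `φ ∈ (S¹)ⁿ`. If `f` is colopsided at `φ`, i.e., the origin is not
in the relative interior of the convex hull of the points `(b_α/|b_α|)·φ^α` for `α` in
the support of `f`, then `f` does not vanish at any point of `(ℂ*)ⁿ` with entrywise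
phases `φ`. -/
theorem eval_ne_zero_of_colopsided {n : ℕ} (f : MvPolynomial (Fin n) ℂ) (hf : f ≠ 0)
    (φ : Fin n → ℂ) (hφ : ∀ i, ‖φ i‖ = 1)
    (hcolop : (0 : ℂ) ∉ intrinsicInterior ℝ (convexHull ℝ
      {w : ℂ | ∃ α ∈ f.support,
        w = (f.coeff α / ‖f.coeff α‖) * ∏ i, φ i ^ α i})) :
    ∀ z : Fin n → ℂ, (∀ i, z i ≠ 0) → (∀ i, z i / ‖z i‖ = φ i) →
      MvPolynomial.eval z f ≠ 0 := by
  classical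
  intro z hz hφz heval
  apply hcolop
  set g : (Fin n →₀ ℕ) → ℂ :=
    fun α => (f.coeff α / ‖f.coeff α‖) * ∏ i, φ i ^ α i with hg
  set t : Finset ℂ := f.support.image g with htdef
  have hSt : {w : ℂ | ∃ α ∈ f.support,
      w = (f.coeff α / ‖f.coeff α‖) * ∏ i, φ i ^ α i} = (t : Set ℂ) := by
    ext w
    simp only [htdef, Finset.coe_image, Set.mem_image, Finset.mem_coe, Set.mem_setOf_eq, hg]
    constructor
    · rintro ⟨α, hα, rfl⟩; exact ⟨α, hα, rfl⟩
    · rintro ⟨α, hα, rfl⟩; exact ⟨α, hα, rfl⟩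
  rw [hSt]
  -- weights
  set d : (Fin n →₀ ℕ) → ℝ :=
    fun α => ‖f.coeff α‖ * ∏ i, (‖z i‖) ^ α i with hd
  have hsupp : f.support.Nonempty := MvPolynomial.support_nonempty.2 hf
  have hdpos : ∀ α ∈ f.support, 0 < d α := by
    intro α hα
    have h1 : f.coeff α ≠ 0 := MvPolynomial.mem_support_iff.1 hα
    have h2 : 0 < ‖f.coeff α‖ := norm_pos_iff.2 h1
    have h3 : 0 < ∏ i, (‖z i‖) ^ α i := by
      apply Finset.prod_pos
      intro i _
      exact pow_pos (norm_pos_iff.2 (hz i)) _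
    exact mul_pos h2 h3
  have hterm : ∀ α ∈ f.support, (d α : ℝ) • g α = f.coeff α * ∏ i, z i ^ α i := by
    intro α hα
    have h1 : f.coeff α ≠ 0 := MvPolynomial.mem_support_iff.1 hα
    have habs : (‖f.coeff α‖ : ℂ) ≠ 0 := by
      simpa using (norm_pos_iff.2 h1).ne'
    have hzi : ∀ i, ((‖z i‖ : ℂ)) ≠ 0 := by
      intro i; simpa using (norm_pos_iff.2 (hz i)).ne'
    have hφi : ∀ i, φ i = z i / (‖z i‖ : ℂ) := fun i => (hφz i).symm
    rw [Complex.real_smul, hg, hd]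
    push_cast
    simp only [hφi, div_pow]
    rw [Finset.prod_div_distrib]
    have hP : (∏ i, ((‖z i‖ : ℂ)) ^ α i) ≠ 0 :=
      Finset.prod_ne_zero_iff.2 (fun i _ => pow_ne_zero _ (hzi i))
    field_simp
  -- fiberwise sums
  set c0 : ℂ → ℝ := fun w => ∑ α ∈ f.support.filter (fun β => g β = w), d α with hc0
  have hc0sum : ∑ w ∈ t, c0 w = ∑ α ∈ f.support, d α := by
    refine Finset.sum_image' d (fun α hα => ?_)
    rfl
  have hc0zero : ∑ w ∈ t, c0 w • w = 0 := by
    have h1 : ∑ w ∈ t, c0 w • w = ∑ α ∈ f.support, d α • g α := by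
      refine Finset.sum_image' (fun α => d α • g α) (fun α hα => ?_)
      rw [hc0, Finset.sum_smul]
      refine Finset.sum_congr rfl (fun β hβ => ?_)
      have hgβ := (Finset.mem_filter.1 hβ).2
      simp only [hgβ]
    rw [h1]
    have h2 : ∑ α ∈ f.support, d α • g α = MvPolynomial.eval z f := by
      rw [MvPolynomial.eval_eq']
      exact Finset.sum_congr rfl hterm
    rw [h2, heval]
  set D : ℝ := ∑ α ∈ f.support, d α with hD
  have hDpos : 0 < D := Finset.sum_pos hdpos hsupp
  have htne : t.Nonempty := hsupp.image g
  refine zero_mem_intrinsicInterior_of_pos_combo t htne (fun w => c0 w / D) ?_ ?_ ?_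
  · intro w hw
    obtain ⟨α, hα, rfl⟩ := Finset.mem_image.1 hw
    have : 0 < c0 (g α) := by
      refine Finset.sum_pos ?_ ⟨α, Finset.mem_filter.2 ⟨hα, rfl⟩⟩
      intro β hβ
      exact hdpos β (Finset.mem_filter.1 hβ).1
    positivity
  · rw [← Finset.sum_div, hc0sum, div_self hDpos.ne']
  · have : ∑ w ∈ t, (c0 w / D) • w = D⁻¹ • ∑ w ∈ t, c0 w • w := by
      rw [Finset.smul_sum]
      refine Finset.sum_congr rfl (fun w _ => ?_)
      rw [smul_smul, div_eq_inv_mul]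
    rw [this, hc0zero, smul_zero]
end

section
/- Let S be an n×m generalized sign matrix (entries in {−1,0,1}) with m ≥ n. Then sign-rank(S) = n if and only if for every vector d ∈ {−1,0,1}^n with d not identically zero, the matrix obtained by scaling row i of S by d_i has a unisigned nonzero column, i.e., a column that is not identically zero and whose entries all lie in {0,1} or all lie in {0,−1}. -/
/-- The sign rank of a real matrix `S` (intended with entries in `{-1,0,1}`): the minimum
rank over all real matrices whose entrywise signs agree with `S`. -/
noncomputable def signRank {n m : ℕ} (S : Matrix (Fin n) (Fin m) ℝ) : ℕ :=
  sInf {r | ∃ M : Matrix (Fin n) (Fin m) ℝ,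
    (∀ i j, Real.sign (M i j) = S i j) ∧ M.rank = r}

open Matrix in
lemma rank_eq_of_rows_indep {n m : ℕ} (M : Matrix (Fin n) (Fin m) ℝ)
    (h : ∀ c : Fin n → ℝ, (∀ j, ∑ i, c i * M i j = 0) → c = 0) : M.rank = n := by
  rw [← Matrix.rank_transpose, Matrix.rank]
  have hinj : Function.Injective Mᵀ.mulVecLin := by
    rw [← LinearMap.ker_eq_bot, LinearMap.ker_eq_bot']
    intro c hc
    apply h
    intro j
    have := congrFun hc j
    simpa [Matrix.mulVecLin, Matrix.mulVec, Matrix.vecMul, dotProduct, mul_comm] using this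
  rw [LinearMap.finrank_range_of_inj hinj]
  simp

open Matrix in
lemma rank_lt_of_leftKernel {n m : ℕ} (M : Matrix (Fin n) (Fin m) ℝ) (c : Fin n → ℝ)
    (hc : c ≠ 0) (h : ∀ j, ∑ i, c i * M i j = 0) : M.rank < n := by
  rw [← Matrix.rank_transpose, Matrix.rank]
  have hker : c ∈ LinearMap.ker Mᵀ.mulVecLin := by
    ext j
    simpa [Matrix.mulVecLin, Matrix.mulVec, Matrix.vecMul, dotProduct, mul_comm] using h j
  have h1 : 0 < Module.finrank ℝ (LinearMap.ker Mᵀ.mulVecLin) := by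
    rw [Module.finrank_pos_iff]
    exact ⟨⟨⟨c, hker⟩, 0, by simpa using hc⟩⟩
  have h2 := LinearMap.finrank_range_add_finrank_ker Mᵀ.mulVecLin
  have h3 : Module.finrank ℝ (Fin n → ℝ) = n := by simp
  omega

lemma sign_self_of_mem {x : ℝ} (h : x = -1 ∨ x = 0 ∨ x = 1) : Real.sign x = x := by
  rcases h with h | h | h <;> subst h
  · exact Real.sign_of_neg (by norm_num)
  · exact Real.sign_zero
  · exact Real.sign_of_pos (by norm_num)

lemma sign_mem (x : ℝ) : Real.sign x = -1 ∨ Real.sign x = 0 ∨ Real.sign x = 1 :=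
  Real.sign_apply_eq x

lemma real_sign_mul (x y : ℝ) : Real.sign (x * y) = Real.sign x * Real.sign y := by
  rcases lt_trichotomy x 0 with hx | hx | hx <;> rcases lt_trichotomy y 0 with hy | hy | hy
  · rw [Real.sign_of_pos (mul_pos_of_neg_of_neg hx hy), Real.sign_of_neg hx,
      Real.sign_of_neg hy]; norm_num
  · subst hy; simp [Real.sign_zero]
  · rw [Real.sign_of_neg (mul_neg_of_neg_of_pos hx hy), Real.sign_of_neg hx,
      Real.sign_of_pos hy]; norm_num
  · subst hx; simp [Real.sign_zero]
  · subst hx; simp [Real.sign_zero]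
  · subst hx; simp [Real.sign_zero]
  · rw [Real.sign_of_neg (mul_neg_of_pos_of_neg hx hy), Real.sign_of_pos hx,
      Real.sign_of_neg hy]; norm_num
  · subst hy; simp [Real.sign_zero]
  · rw [Real.sign_of_pos (mul_pos hx hy), Real.sign_of_pos hx, Real.sign_of_pos hy]; norm_num

lemma tri_resolve {x : ℝ} (hx : x = -1 ∨ x = 0 ∨ x = 1) (h0 : x ≠ 0) (h1 : x ≠ -1) :
    x = 1 := by tauto

lemma tri_resolve' {x : ℝ} (hx : x = -1 ∨ x = 0 ∨ x = 1) (h0 : x ≠ 0) (h1 : x ≠ 1) :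
    x = -1 := by tauto

/-- An `n × m` generalized sign matrix (entries in `{-1,0,1}`) with `m ≥ n` has maximal
sign rank `n` iff every scaling of its rows by scalars in `{-1,0,1}`, not all zero, leaves
a unisigned nonzero column: a column that is not identically zero and whose scaled
entries all lie in `{0,1}` or all lie in `{0,-1}`. -/
theorem signRank_eq_max_iff_unisigned {n m : ℕ} (hnm : n ≤ m)
    (S : Matrix (Fin n) (Fin m) ℝ)
    (hsign : ∀ i j, S i j = -1 ∨ S i j = 0 ∨ S i j = 1) :
    signRank S = n ↔
      ∀ d : Fin n → ℝ, (∀ i, d i = -1 ∨ d i = 0 ∨ d i = 1) → (∃ i, d i ≠ 0) →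
        ∃ j, (∃ i, d i * S i j ≠ 0) ∧
          ((∀ i, d i * S i j = 0 ∨ d i * S i j = 1) ∨
           (∀ i, d i * S i j = 0 ∨ d i * S i j = -1)) := by
  constructor
  · -- signRank = n → unisigned condition
    intro hrank d hd hd0
    by_contra hcol
    push_neg at hcol
    classical
    set P : Fin m → Finset (Fin n) := fun j => Finset.univ.filter (fun i => d i * S i j = 1)
      with hP
    set N : Fin m → Finset (Fin n) := fun j => Finset.univ.filter (fun i => d i * S i j = -1)
      with hN
    set M : Matrix (Fin n) (Fin m) ℝ := fun i j =>
      if d i = 0 then S i j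
      else if d i * S i j = 1 then d i * ((P j).card : ℝ)⁻¹
      else if d i * S i j = -1 then -(d i) * ((N j).card : ℝ)⁻¹
      else 0 with hM
    have hdsq : ∀ i, d i ≠ 0 → d i * d i = 1 := by
      intro i hi
      rcases hd i with h | h | h
      · rw [h]; norm_num
      · exact absurd h hi
      · rw [h]; norm_num
    have hprod : ∀ i j, d i * S i j = -1 ∨ d i * S i j = 0 ∨ d i * S i j = 1 := by
      intro i j
      rcases hd i with h | h | h <;> rcases hsign i j with h' | h' | h' <;>
        rw [h, h'] <;> norm_num
    have hsgn : ∀ i j, Real.sign (M i j) = S i j := by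
      intro i j
      by_cases hdi : d i = 0
      · have : M i j = S i j := by simp only [hM]; rw [if_pos hdi]
        rw [this]
        exact sign_self_of_mem (hsign i j)
      · by_cases h1 : d i * S i j = 1
        · have hmem : i ∈ P j := by simp [hP, h1]
          have hcard : (0 : ℝ) < ((P j).card : ℝ) := by
            exact_mod_cast Finset.card_pos.mpr ⟨i, hmem⟩
          have hinv : (0 : ℝ) < ((P j).card : ℝ)⁻¹ := inv_pos.mpr hcard
          have hMij : M i j = d i * ((P j).card : ℝ)⁻¹ := by
            simp only [hM]; rw [if_neg hdi, if_pos h1]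
          have hS : S i j = d i := by
            have hq := hdsq i hdi
            calc S i j = d i * d i * S i j := by rw [hq]; ring
              _ = d i * (d i * S i j) := by ring
              _ = d i := by rw [h1, mul_one]
          rcases hd i with h | h | h
          · rw [hMij, hS, h, Real.sign_of_neg (by nlinarith)]
          · exact absurd h hdi
          · rw [hMij, hS, h, Real.sign_of_pos (by nlinarith)]
        · by_cases h2 : d i * S i j = -1
          · have hmem : i ∈ N j := by simp [hN, h2]
            have hcard : (0 : ℝ) < ((N j).card : ℝ) := by
              exact_mod_cast Finset.card_pos.mpr ⟨i, hmem⟩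
            have hinv : (0 : ℝ) < ((N j).card : ℝ)⁻¹ := inv_pos.mpr hcard
            have hMij : M i j = -(d i) * ((N j).card : ℝ)⁻¹ := by
              simp only [hM]; rw [if_neg hdi, if_neg h1, if_pos h2]
            have hS : S i j = -(d i) := by
              have hq := hdsq i hdi
              calc S i j = d i * d i * S i j := by rw [hq]; ring
                _ = d i * (d i * S i j) := by ring
                _ = -(d i) := by rw [h2]; ring
            rcases hd i with h | h | h
            · rw [hMij, hS, h, Real.sign_of_pos (by nlinarith)]; norm_num
            · exact absurd h hdi
            · rw [hMij, hS, h, Real.sign_of_neg (by nlinarith)]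
          · have hS : S i j = 0 := by
              have h0 : d i * S i j = 0 := by
                rcases hprod i j with h | h | h
                · exact absurd h h2
                · exact h
                · exact absurd h h1
              rcases mul_eq_zero.mp h0 with h | h
              · exact absurd h hdi
              · exact h
            have hMij : M i j = 0 := by
              simp only [hM]; rw [if_neg hdi, if_neg h1, if_neg h2]
            rw [hMij, Real.sign_zero, hS]
    have hsum : ∀ j, ∑ i, d i * M i j = 0 := by
      intro j
      have hpt : ∀ i, d i * M i j =
          (if d i * S i j = 1 then ((P j).card : ℝ)⁻¹ else 0) +
          (if d i * S i j = -1 then -(((N j).card : ℝ)⁻¹) else 0) := by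
        intro i
        by_cases hdi : d i = 0
        · have : M i j = S i j := by simp only [hM]; rw [if_pos hdi]
          rw [this, hdi]
          norm_num
        · by_cases h1 : d i * S i j = 1
          · have h2 : d i * S i j ≠ -1 := by rw [h1]; norm_num
            have hMij : M i j = d i * ((P j).card : ℝ)⁻¹ := by
              simp only [hM]; rw [if_neg hdi, if_pos h1]
            rw [hMij, if_pos h1, if_neg h2, ← mul_assoc, hdsq i hdi]
            ring
          · by_cases h2 : d i * S i j = -1
            · have hMij : M i j = -(d i) * ((N j).card : ℝ)⁻¹ := by
                simp only [hM]; rw [if_neg hdi, if_neg h1, if_pos h2]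
              rw [hMij, if_neg h1, if_pos h2,
                show d i * (-(d i) * ((N j).card : ℝ)⁻¹)
                  = -(d i * d i) * ((N j).card : ℝ)⁻¹ by ring, hdsq i hdi]
              ring
            · have hMij : M i j = 0 := by
                simp only [hM]; rw [if_neg hdi, if_neg h1, if_neg h2]
              rw [hMij, if_neg h1, if_neg h2]
              ring
      rw [Finset.sum_congr rfl (fun i _ => hpt i), Finset.sum_add_distrib,
        ← Finset.sum_filter, ← Finset.sum_filter]
      simp only [Finset.sum_const, nsmul_eq_mul]
      rw [show Finset.univ.filter (fun i => d i * S i j = 1) = P j from rfl,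
        show Finset.univ.filter (fun i => d i * S i j = -1) = N j from rfl]
      by_cases hz : ∃ i, d i * S i j ≠ 0
      · obtain ⟨⟨i1, hi1a, hi1b⟩, ⟨i2, hi2a, hi2b⟩⟩ := hcol j hz
        have hi2 : d i2 * S i2 j = 1 := tri_resolve (hprod i2 j) hi2a hi2b
        have hi1 : d i1 * S i1 j = -1 := tri_resolve' (hprod i1 j) hi1a hi1b
        have hPc : ((P j).card : ℝ) ≠ 0 := by
          have : 0 < (P j).card := Finset.card_pos.mpr ⟨i2, by simp [hP, hi2]⟩
          exact_mod_cast this.ne'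
        have hNc : ((N j).card : ℝ) ≠ 0 := by
          have : 0 < (N j).card := Finset.card_pos.mpr ⟨i1, by simp [hN, hi1]⟩
          exact_mod_cast this.ne'
        rw [mul_inv_cancel₀ hPc]
        field_simp
        norm_num
      · push_neg at hz
        have hPe : P j = ∅ := by
          rw [hP]
          rw [Finset.filter_eq_empty_iff]
          intro i _
          rw [hz i]; norm_num
        have hNe : N j = ∅ := by
          rw [hN]
          rw [Finset.filter_eq_empty_iff]
          intro i _
          rw [hz i]; norm_num
        simp [hPe, hNe]
    have hlt : M.rank < n := by
      apply rank_lt_of_leftKernel M d _ hsum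
      obtain ⟨i, hi⟩ := hd0
      intro h
      exact hi (congrFun h i)
    have hle : signRank S ≤ M.rank := Nat.sInf_le ⟨M, hsgn, rfl⟩
    omega
  · -- unisigned condition → signRank = n
    intro h
    have key : ∀ M : Matrix (Fin n) (Fin m) ℝ,
        (∀ i j, Real.sign (M i j) = S i j) → M.rank = n := by
      intro M hM
      apply rank_eq_of_rows_indep
      intro c hc
      by_contra hc0
      obtain ⟨j, hj1, hj2⟩ := h (fun i => Real.sign (c i))
        (fun i => sign_mem (c i))
        (by
          obtain ⟨i, hi⟩ : ∃ i, c i ≠ 0 := by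
            by_contra hh; push_neg at hh; exact hc0 (funext hh)
          exact ⟨i, by simpa [Real.sign_eq_zero_iff] using hi⟩)
      have hsig : ∀ i, Real.sign (c i) * S i j = Real.sign (c i * M i j) := by
        intro i
        rw [real_sign_mul, hM i j]
      obtain ⟨i0, hi0⟩ := hj1
      rw [hsig i0, Ne, Real.sign_eq_zero_iff] at hi0
      have hzero := hc j
      rcases hj2 with hpos | hneg
      · have hnonneg : ∀ i, 0 ≤ c i * M i j := by
          intro i
          rcases hpos i with hh | hh <;> rw [hsig i] at hh
          · rw [Real.sign_eq_zero_iff] at hh; exact le_of_eq hh.symm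
          · by_contra hlt
            push_neg at hlt
            rw [Real.sign_of_neg hlt] at hh; norm_num at hh
        have hposi : 0 < c i0 * M i0 j := lt_of_le_of_ne (hnonneg i0) (Ne.symm hi0)
        have : 0 < ∑ i, c i * M i j :=
          Finset.sum_pos' (fun i _ => hnonneg i) ⟨i0, Finset.mem_univ i0, hposi⟩
        linarith
      · have hnonpos : ∀ i, c i * M i j ≤ 0 := by
          intro i
          rcases hneg i with hh | hh <;> rw [hsig i] at hh
          · rw [Real.sign_eq_zero_iff] at hh; exact le_of_eq hh
          · by_contra hlt
            push_neg at hlt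
            rw [Real.sign_of_pos hlt] at hh; norm_num at hh
        have hnegi : c i0 * M i0 j < 0 := lt_of_le_of_ne (hnonpos i0) hi0
        have : ∑ i, c i * M i j < 0 :=
          Finset.sum_neg' (fun i _ => hnonpos i) ⟨i0, Finset.mem_univ i0, hnegi⟩
        linarith
    have hset : {r | ∃ M : Matrix (Fin n) (Fin m) ℝ,
        (∀ i j, Real.sign (M i j) = S i j) ∧ M.rank = r} = {n} := by
      ext r
      constructor
      · rintro ⟨M, hM1, hM2⟩
        simp [← hM2, key M hM1]
      · rintro rfl
        exact ⟨S, fun i j => sign_self_of_mem (hsign i j), key S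
          (fun i j => sign_self_of_mem (hsign i j))⟩
    rw [signRank, hset, csInf_singleton]
end
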